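/- arXiv:1109.4615 — 2 statements merged into one kernel-verified Lean document; each statement's English description precedes it below -/
import Mathlib

section
/- Let A ⊂ M_d(ℂ) be a compact set with positive joint spectral radius, indexed in a compact metric space I, and let Z_A := ⋃_{μ ∈ M_max(A)} supp μ be the Mather set. Let d be a metric generating the topology of Σ_I and set dist(x, Z_A) := inf{d(x,y) : y ∈ Z_A}. If z ∈ Σ_I is weakly extremal, then lim_{n→∞} (1/n) Σ_{k=0}^{n−1} dist(σ^k z, Z_A) = 0. -/
open MeasureTheory Filter Topology
open scoped ENNReal NNReal
open scoped Matrix.Norms.L2Operator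

noncomputable section

/-- The shift map `σ` on one-sided sequences. -/
def shft {I : Type*} (x : ℕ → I) : ℕ → I := fun n => x (n + 1)

/-- `coc A x n = A_{x (n-1)} ⋯ A_{x 1} A_{x 0}`, i.e. the matrix cocycle `L_A(x,n)`. -/
def coc {I : Type*} {d : ℕ} (A : I → Matrix (Fin d) (Fin d) ℂ) (x : ℕ → I) :
    ℕ → Matrix (Fin d) (Fin d) ℂ
  | 0 => 1
  | n + 1 => A (x n) * coc A x n

/-- The joint spectral radius of the family `A` (with respect to the operator norm induced by
the Euclidean norm).  By Fekete's subadditivity lemma, the limit defining the joint spectral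
radius coincides with this infimum. -/
def jsr {I : Type*} {d : ℕ} (A : I → Matrix (Fin d) (Fin d) ℂ) : ℝ :=
  ⨅ n : ℕ+, (⨆ x : ℕ → I, ‖coc A x (n : ℕ)‖) ^ (((n : ℕ) : ℝ)⁻¹)

/-- `log`, with values in `ℝ ∪ {-∞}`, following the convention `log 0 = -∞`. -/
def elog (r : ℝ) : EReal := if r ≤ 0 then ⊥ else ((Real.log r : ℝ) : EReal)

/-- The nonnegative part of an extended real number, as an extended nonnegative real. -/
def epos (x : EReal) : ℝ≥0∞ := if x = ⊤ then ⊤ else ENNReal.ofReal x.toReal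

/-- Integral of a function with values in `ℝ ∪ {-∞}` (the value may be `-∞`). -/
def eInt {Y : Type*} [MeasurableSpace Y] (μ : Measure Y) (f : Y → EReal) : EReal :=
  ((∫⁻ y, epos (f y) ∂μ : ℝ≥0∞) : EReal) - ((∫⁻ y, epos (-f y) ∂μ : ℝ≥0∞) : EReal)

/-- `(1/n)` as an extended real number. -/
def cE (n : ℕ) : EReal := (((n : ℝ)⁻¹ : ℝ) : EReal)

/-- The set `M_T` of `T`-invariant Borel probability measures. -/
def MTset {X : Type*} [MeasurableSpace X] (T : X → X) : Set (Measure X) :=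
  {μ | IsProbabilityMeasure μ ∧ MeasurePreserving T μ μ}

/-- The set `M_σ` of shift-invariant Borel probability measures on `Σ_I = I^ℕ`. -/
def Minv (I : Type*) [MeasurableSpace I] : Set (Measure (ℕ → I)) :=
  {μ | IsProbabilityMeasure μ ∧ MeasurePreserving shft μ μ}

/-- `(1/n) ∫ log N(L_A(x,n)) dμ(x)`, with values in `ℝ ∪ {-∞}`. -/
def avg {I : Type*} [MeasurableSpace I] {d : ℕ}
    (N : Matrix (Fin d) (Fin d) ℂ → ℝ) (A : I → Matrix (Fin d) (Fin d) ℂ)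
    (μ : Measure (ℕ → I)) (n : ℕ) : EReal :=
  cE n * eInt μ (fun x => elog (N (coc A x n)))

/-- The set of maximising measures `M_max(A)` (defined via the Euclidean operator norm). -/
def Mmax {I : Type*} [MeasurableSpace I] {d : ℕ} (A : I → Matrix (Fin d) (Fin d) ℂ) :
    Set (Measure (ℕ → I)) :=
  {μ | μ ∈ Minv I ∧ (⨅ n : ℕ+, avg (fun M => ‖M‖) A μ (n : ℕ)) = elog (jsr A)}

/-- The topological support of a measure. -/
def msupport {Y : Type*} [TopologicalSpace Y] [MeasurableSpace Y] (μ : Measure Y) : Set Y :=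
  {y | ∀ U : Set Y, IsOpen U → y ∈ U → 0 < μ U}

/-- The Mather set `Z_A`. -/
def mather {I : Type*} [TopologicalSpace I] [MeasurableSpace I] {d : ℕ}
    (A : I → Matrix (Fin d) (Fin d) ℂ) : Set (ℕ → I) :=
  ⋃ μ ∈ Mmax A, msupport μ

/-- `N` is a norm on the complex vector space `E`. -/
def IsNorm {E : Type*} [AddCommGroup E] [Module ℂ E] (N : E → ℝ) : Prop :=
  (∀ v, N v = 0 ↔ v = 0) ∧ (∀ (c : ℂ) (v : E), N (c • v) = ‖c‖ * N v) ∧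
    ∀ v w, N (v + w) ≤ N v + N w

/-- The operator norm on `d × d` matrices induced by a norm `N` on `ℂ^d`. -/
def indNorm {d : ℕ} (N : (Fin d → ℂ) → ℝ) (M : Matrix (Fin d) (Fin d) ℂ) : ℝ :=
  sSup {c | ∃ v, N v = 1 ∧ c = N (M.mulVec v)}

/-- `A` is relatively product bounded. -/
def RelPB {I : Type*} {d : ℕ} (A : I → Matrix (Fin d) (Fin d) ℂ) : Prop :=
  ∃ C > 1, ∀ n : ℕ, 1 ≤ n → ∀ x : ℕ → I, ‖coc A x n‖ ≤ C * jsr A ^ n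

/-- The point `x` is strongly extremal for `A`. -/
def StrongExt {I : Type*} {d : ℕ} (A : I → Matrix (Fin d) (Fin d) ℂ) (x : ℕ → I) : Prop :=
  ∃ ε > 0, ∀ n : ℕ, 1 ≤ n → ε * jsr A ^ n ≤ ‖coc A x n‖

/-- The point `x` is weakly extremal for `A`. -/
def WeakExt {I : Type*} {d : ℕ} (A : I → Matrix (Fin d) (Fin d) ℂ) (x : ℕ → I) : Prop :=
  Tendsto (fun n : ℕ => ‖coc A x n‖ ^ ((n : ℝ)⁻¹)) atTop (𝓝 (jsr A))

/-- `(A1, A2, B, M)` is an upper triangularisation of the family `A`, with respect to the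
decomposition `d = k + m`. -/
def UpperTri {I : Type*} {d k m : ℕ} (A : I → Matrix (Fin d) (Fin d) ℂ) (hd : d = k + m)
    (A1 : I → Matrix (Fin k) (Fin k) ℂ) (A2 : I → Matrix (Fin m) (Fin m) ℂ)
    (B : I → Matrix (Fin k) (Fin m) ℂ) (M : Matrix (Fin d) (Fin d) ℂ) : Prop :=
  IsUnit M ∧ ∀ i : I,
    Matrix.reindex ((finCongr hd).trans finSumFinEquiv.symm)
        ((finCongr hd).trans finSumFinEquiv.symm) (M⁻¹ * A i * M)
      = Matrix.fromBlocks (A1 i) (B i) 0 (A2 i)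

section Aux1

variable {I : Type*} {d : ℕ} (A : I → Matrix (Fin d) (Fin d) ℂ)

lemma shft_iterate (x : ℕ → I) (m : ℕ) : shft^[m] x = fun n => x (n + m) := by
  induction m with
  | zero => simp
  | succ m ih =>
    rw [Function.iterate_succ_apply', ih]
    funext n
    simp [shft]
    ring_nf

lemma coc_add (x : ℕ → I) (m n : ℕ) :
    coc A x (m + n) = coc A (shft^[m] x) n * coc A x m := by
  induction n with
  | zero => simp [coc]
  | succ n ih =>
    have h1 : m + (n + 1) = (m + n) + 1 := by ring
    rw [h1]
    show A (x (m + n)) * coc A x (m + n) = coc A (shft^[m] x) (n + 1) * coc A x m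
    rw [ih]
    have h2 : A (shft^[m] x n) = A (x (m + n)) := by
      rw [shft_iterate]
      simp [Nat.add_comm]
    show _ = A (shft^[m] x n) * coc A (shft^[m] x) n * coc A x m
    rw [h2, Matrix.mul_assoc]

variable [TopologicalSpace I]

lemma coc_continuous (hA : Continuous A) (n : ℕ) :
    Continuous (fun x : ℕ → I => coc A x n) := by
  induction n with
  | zero => simpa [coc] using continuous_const
  | succ n ih =>
    show Continuous fun x : ℕ → I => A (x n) * coc A x n
    exact Continuous.matrix_mul (hA.comp (continuous_apply n)) ih

end Aux1

section Aux2

variable {I : Type*} [MetricSpace I] [CompactSpace I] [Nonempty I]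
  {d : ℕ} {A : I → Matrix (Fin d) (Fin d) ℂ}

lemma exists_norm_A_le (hA : Continuous A) : ∃ C : ℝ, 1 ≤ C ∧ ∀ i, ‖A i‖ ≤ C := by
  obtain ⟨C₀, hC₀⟩ := (isCompact_univ.image (hA.norm)).bddAbove
  refine ⟨max C₀ 1, le_max_right _ _, fun i => ?_⟩
  exact le_trans (hC₀ ⟨i, trivial, rfl⟩) (le_max_left _ _)

lemma norm_coc_le (hA : Continuous A) {C : ℝ} (hC : 1 ≤ C) (hCA : ∀ i, ‖A i‖ ≤ C)
    (x : ℕ → I) (n : ℕ) : ‖coc A x n‖ ≤ C ^ n := by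
  induction n with
  | zero =>
    show ‖(1 : Matrix (Fin d) (Fin d) ℂ)‖ ≤ 1
    rcases Nat.eq_zero_or_pos d with hd | hd
    · subst hd
      rw [Subsingleton.elim (1 : Matrix (Fin 0) (Fin 0) ℂ) 0, norm_zero]; norm_num
    · have : NeZero d := ⟨hd.ne'⟩
      rw [norm_one]
  | succ n ih =>
    show ‖A (x n) * coc A x n‖ ≤ C ^ (n + 1)
    calc ‖A (x n) * coc A x n‖ ≤ ‖A (x n)‖ * ‖coc A x n‖ := norm_mul_le _ _
    _ ≤ C * C ^ n := by
        apply mul_le_mul (hCA _) ih (norm_nonneg _) (le_trans zero_le_one hC)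
    _ = C ^ (n + 1) := (pow_succ' C n).symm

lemma bddAbove_norm_coc (hA : Continuous A) (n : ℕ) :
    BddAbove (Set.range fun x : ℕ → I => ‖coc A x n‖) := by
  obtain ⟨C, hC1, hC⟩ := exists_norm_A_le hA
  exact ⟨C ^ n, by rintro r ⟨x, rfl⟩; exact norm_coc_le hA hC1 hC x n⟩

/-- `G A n` : the sup norm over all products of length `n`. -/
noncomputable def Gsup (A : I → Matrix (Fin d) (Fin d) ℂ) (n : ℕ) : ℝ :=
  ⨆ x : ℕ → I, ‖coc A x n‖

lemma norm_coc_le_Gsup (hA : Continuous A) (x : ℕ → I) (n : ℕ) :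
    ‖coc A x n‖ ≤ Gsup A n :=
  le_ciSup (bddAbove_norm_coc hA n) x

lemma Gsup_nonneg (hA : Continuous A) (n : ℕ) : 0 ≤ Gsup A n :=
  le_trans (norm_nonneg _) (norm_coc_le_Gsup hA (Classical.arbitrary _) n)

lemma jsr_le_Gsup_rpow (n : ℕ+) : jsr A ≤ (Gsup A (n : ℕ)) ^ (((n : ℕ) : ℝ)⁻¹) := by
  apply ciInf_le _ n
  refine ⟨0, ?_⟩
  rintro r ⟨m, rfl⟩
  exact Real.rpow_nonneg (Real.iSup_nonneg fun x => norm_nonneg _) _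

lemma Gsup_pos (hA : Continuous A) (hpos : 0 < jsr A) (n : ℕ+) : 0 < Gsup A (n : ℕ) := by
  rcases lt_or_ge 0 (Gsup A (n : ℕ)) with h | h
  · exact h
  · exfalso
    have h0 : Gsup A (n : ℕ) = 0 := le_antisymm h (Gsup_nonneg hA _)
    have := jsr_le_Gsup_rpow (A := A) n
    rw [h0, Real.zero_rpow (by positivity)] at this
    linarith

end Aux2

lemma sum_shift_telescope (c : ℕ → ℝ) (n M : ℕ) :
    ∑ k ∈ Finset.range M, (c (k + n) - c k)
      = (∑ i ∈ Finset.range n, c (M + i)) - ∑ i ∈ Finset.range n, c i := by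
  have h1 : ∑ k ∈ Finset.range (n + M), c k
      = ∑ k ∈ Finset.range n, c k + ∑ k ∈ Finset.range M, c (n + k) :=
    Finset.sum_range_add c n M
  have h2 : ∑ k ∈ Finset.range (M + n), c k
      = ∑ k ∈ Finset.range M, c k + ∑ i ∈ Finset.range n, c (M + i) :=
    Finset.sum_range_add c M n
  have h3 : ∑ k ∈ Finset.range M, c (n + k) = ∑ k ∈ Finset.range M, c (k + n) :=
    Finset.sum_congr rfl fun k _ => by rw [Nat.add_comm]
  rw [Finset.sum_sub_distrib]
  rw [Nat.add_comm n M] at h1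
  linarith

section Aux3

variable {I : Type*} [MetricSpace I] [CompactSpace I] [Nonempty I]
  {d : ℕ} {A : I → Matrix (Fin d) (Fin d) ℂ} {z : ℕ → I}

lemma coc_z_norm_pos (hpos : 0 < jsr A) (hz : WeakExt A z) (N : ℕ) :
    0 < ‖coc A z N‖ := by
  by_contra h
  have h0 : ‖coc A z N‖ = 0 := le_antisymm (not_lt.mp h) (norm_nonneg _)
  have hM : ∀ M, N ≤ M → ‖coc A z M‖ = 0 := by
    intro M hM
    obtain ⟨k, rfl⟩ := Nat.exists_eq_add_of_le hM
    rw [coc_add]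
    refine le_antisymm ?_ (norm_nonneg _)
    calc ‖coc A (shft^[N] z) k * coc A z N‖
        ≤ ‖coc A (shft^[N] z) k‖ * ‖coc A z N‖ := norm_mul_le _ _
      _ = 0 := by rw [h0, mul_zero]
  have hev : (fun M : ℕ => ‖coc A z M‖ ^ ((M : ℝ)⁻¹)) =ᶠ[atTop] (fun _ => (0 : ℝ)) := by
    filter_upwards [eventually_ge_atTop (max N 1)] with M hMge
    rw [hM M (le_trans (le_max_left _ _) hMge), Real.zero_rpow]
    have : 1 ≤ M := le_trans (le_max_right _ _) hMge
    positivity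
  have hz' : Tendsto (fun M : ℕ => ‖coc A z M‖ ^ ((M : ℝ)⁻¹)) atTop (𝓝 (jsr A)) := hz
  have : jsr A = (0 : ℝ) := tendsto_nhds_unique hz' (Tendsto.congr' hev.symm tendsto_const_nhds)
  linarith

lemma coc_orbit_norm_pos (hpos : 0 < jsr A) (hz : WeakExt A z) (k n : ℕ) :
    0 < ‖coc A (shft^[k] z) n‖ := by
  have h1 := coc_z_norm_pos hpos hz (k + n)
  rw [coc_add] at h1
  have h2 := norm_mul_le (coc A (shft^[k] z) n) (coc A z k)
  have h3 := norm_nonneg (coc A z k)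
  have h4 := norm_nonneg (coc A (shft^[k] z) n)
  rcases h4.lt_or_eq with h | h
  · exact h
  · exfalso; nlinarith

lemma tendsto_inv_mul_log_coc (hpos : 0 < jsr A) (hz : WeakExt A z) :
    Tendsto (fun N : ℕ => ((N : ℝ))⁻¹ * Real.log ‖coc A z N‖) atTop
      (𝓝 (Real.log (jsr A))) := by
  have h1 : Tendsto (fun N : ℕ => Real.log (‖coc A z N‖ ^ ((N : ℝ)⁻¹))) atTop
      (𝓝 (Real.log (jsr A))) :=
    ((Real.continuousAt_log hpos.ne').tendsto).comp hz
  apply h1.congr'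
  filter_upwards [eventually_ge_atTop 1] with N _
  exact Real.log_rpow (coc_z_norm_pos hpos hz N) _

lemma log_coc_orbit_ge (hpos : 0 < jsr A) (hz : WeakExt A z) (k n : ℕ) :
    Real.log ‖coc A z (k + n)‖ - Real.log ‖coc A z k‖
      ≤ Real.log ‖coc A (shft^[k] z) n‖ := by
  have h1 : ‖coc A z (k + n)‖ ≤ ‖coc A (shft^[k] z) n‖ * ‖coc A z k‖ := by
    rw [coc_add]; exact norm_mul_le _ _
  have h2 : Real.log ‖coc A z (k + n)‖
      ≤ Real.log ‖coc A (shft^[k] z) n‖ + Real.log ‖coc A z k‖ := by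
    calc Real.log ‖coc A z (k + n)‖ ≤ Real.log (‖coc A (shft^[k] z) n‖ * ‖coc A z k‖) :=
          Real.log_le_log (coc_z_norm_pos hpos hz _) h1
      _ = _ := Real.log_mul (coc_orbit_norm_pos hpos hz k n).ne' (coc_z_norm_pos hpos hz k).ne'
  linarith

lemma sum_log_coc_orbit_ge (hpos : 0 < jsr A) (hz : WeakExt A z) (n M : ℕ) :
    (∑ i ∈ Finset.range n, Real.log ‖coc A z (M + i)‖)
      - (∑ i ∈ Finset.range n, Real.log ‖coc A z i‖)
      ≤ ∑ k ∈ Finset.range M, Real.log ‖coc A (shft^[k] z) n‖ := by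
  rw [← sum_shift_telescope (fun j => Real.log ‖coc A z j‖) n M]
  exact Finset.sum_le_sum fun k _ => log_coc_orbit_ge hpos hz k n

lemma tendsto_avg_block (hpos : 0 < jsr A) (hz : WeakExt A z) (n : ℕ) :
    Tendsto (fun M : ℕ => (M : ℝ)⁻¹ *
        ((∑ i ∈ Finset.range n, Real.log ‖coc A z (M + i)‖)
          - ∑ i ∈ Finset.range n, Real.log ‖coc A z i‖))
      atTop (𝓝 ((n : ℝ) * Real.log (jsr A))) := by
  have key : ∀ i : ℕ, Tendsto (fun M : ℕ => (M : ℝ)⁻¹ * Real.log ‖coc A z (M + i)‖)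
      atTop (𝓝 (Real.log (jsr A))) := by
    intro i
    have h1 : Tendsto (fun M : ℕ => (((M + i : ℕ) : ℝ))⁻¹ * Real.log ‖coc A z (M + i)‖)
        atTop (𝓝 (Real.log (jsr A))) :=
      (tendsto_inv_mul_log_coc hpos hz).comp (tendsto_add_atTop_nat i)
    have h2 : Tendsto (fun M : ℕ => (M : ℝ)⁻¹ * ((M + i : ℕ) : ℝ)) atTop (𝓝 1) := by
      have : Tendsto (fun M : ℕ => 1 + (i : ℝ) * ((M : ℝ))⁻¹) atTop (𝓝 (1 + (i:ℝ) * 0)) :=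
        tendsto_const_nhds.add (tendsto_const_nhds.mul tendsto_inv_atTop_nhds_zero_nat)
      rw [mul_zero, add_zero] at this
      apply this.congr'
      filter_upwards [eventually_ge_atTop 1] with M hM
      have hM0 : (M : ℝ) ≠ 0 := Nat.cast_ne_zero.mpr (by omega)
      push_cast
      field_simp
    have h3 := h2.mul h1
    rw [one_mul] at h3
    apply h3.congr'
    filter_upwards [eventually_ge_atTop 1] with M hM
    have hM0 : (M : ℝ) ≠ 0 := Nat.cast_ne_zero.mpr (by omega)
    have hMi : ((M + i : ℕ) : ℝ) ≠ 0 := Nat.cast_ne_zero.mpr (by omega)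
    push_cast
    field_simp
  have hsum : Tendsto (fun M : ℕ => ∑ i ∈ Finset.range n,
      ((M : ℝ)⁻¹ * Real.log ‖coc A z (M + i)‖)) atTop
      (𝓝 (∑ _i ∈ Finset.range n, Real.log (jsr A))) :=
    tendsto_finset_sum _ fun i _ => key i
  have hconst : Tendsto (fun M : ℕ => (M : ℝ)⁻¹ * ∑ i ∈ Finset.range n, Real.log ‖coc A z i‖)
      atTop (𝓝 0) := by
    have := tendsto_inv_atTop_nhds_zero_nat.mul
      (tendsto_const_nhds (x := ∑ i ∈ Finset.range n, Real.log ‖coc A z i‖))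
    rwa [zero_mul] at this
  have := hsum.sub hconst
  rw [Finset.sum_const, Finset.card_range, sub_zero, nsmul_eq_mul] at this
  apply this.congr
  intro M
  rw [mul_sub, Finset.mul_sum, Finset.mul_sum]

end Aux3

section UlimMeasure

variable {X : Type*} [TopologicalSpace X] [CompactSpace X] [T2Space X]
  [MeasurableSpace X] [BorelSpace X]

/-- Every continuous function on a compact space is integrable w.r.t. a finite measure. -/
lemma cont_integrable {f : X → ℝ} (hf : Continuous f) (ρ : Measure X) [IsFiniteMeasure ρ] :
    Integrable f ρ := by
  have := BoundedContinuousFunction.integrable ρ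
    (BoundedContinuousFunction.mkOfCompact (ContinuousMap.mk f hf))
  exact this

lemma cont_bound {f : X → ℝ} (hf : Continuous f) : ∃ C : ℝ, 0 < C ∧ ∀ x, |f x| ≤ C := by
  rcases isEmpty_or_nonempty X with h | h
  · exact ⟨1, one_pos, fun x => (IsEmpty.false x).elim⟩
  obtain ⟨C₀, hC₀⟩ := (isCompact_univ.image hf.abs).bddAbove
  exact ⟨max C₀ 0 + 1, by positivity, fun x =>
    le_trans (le_trans (hC₀ ⟨x, trivial, rfl⟩) (le_max_left _ _)) (by linarith)⟩

variable (𝒰 : Ultrafilter ℕ) (ν : ℕ → Measure X)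

/-- limit along the ultrafilter of a bounded real sequence. -/
lemma ulim_tendsto {u : ℕ → ℝ} {a b : ℝ} (h : ∀ j, u j ∈ Set.Icc a b) :
    Tendsto u 𝒰 (𝓝 (limUnder 𝒰 u)) := by
  have hle : (𝒰.map u : Filter ℝ) ≤ 𝓟 (Set.Icc a b) := by
    rw [Filter.le_principal_iff]
    exact Filter.mem_map.mpr (Filter.Eventually.of_forall h)
  obtain ⟨x, -, hx⟩ := isCompact_Icc.ultrafilter_le_nhds (𝒰.map u) hle
  exact tendsto_nhds_limUnder ⟨x, hx⟩

variable (hν : ∀ j, ν j Set.univ ≤ 1)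
include hν

/-- The set function `E ↦ 𝒰-lim (ν j E)`. -/
noncomputable def Lr (E : Set X) : ℝ := limUnder 𝒰 (fun j => (ν j E).toReal)

lemma nu_toReal_mem (E : Set X) (j : ℕ) : ((ν j E).toReal) ∈ Set.Icc (0:ℝ) 1 := by
  constructor
  · exact ENNReal.toReal_nonneg
  · refine ENNReal.toReal_le_of_le_ofReal zero_le_one ?_
    rw [ENNReal.ofReal_one]
    exact le_trans (measure_mono (Set.subset_univ E)) (hν j)

lemma tendsto_Lr (E : Set X) :
    Tendsto (fun j => (ν j E).toReal) 𝒰 (𝓝 (Lr 𝒰 ν E)) :=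
  ulim_tendsto 𝒰 (nu_toReal_mem ν hν E)

lemma nu_ne_top (E : Set X) (j : ℕ) : ν j E ≠ ⊤ :=
  (lt_of_le_of_lt (le_trans (measure_mono (Set.subset_univ E)) (hν j))
    ENNReal.one_lt_top).ne

lemma Lr_nonneg (E : Set X) : 0 ≤ Lr 𝒰 ν E :=
  le_of_tendsto_of_tendsto' tendsto_const_nhds (tendsto_Lr 𝒰 ν hν E)
    (fun j => (nu_toReal_mem ν hν E j).1)

lemma Lr_mono {E F : Set X} (h : E ⊆ F) : Lr 𝒰 ν E ≤ Lr 𝒰 ν F :=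
  le_of_tendsto_of_tendsto' (tendsto_Lr 𝒰 ν hν E) (tendsto_Lr 𝒰 ν hν F)
    (fun j => ENNReal.toReal_mono (nu_ne_top ν hν F j) (measure_mono h))

lemma Lr_le_one (E : Set X) : Lr 𝒰 ν E ≤ 1 :=
  le_of_tendsto_of_tendsto' (tendsto_Lr 𝒰 ν hν E) tendsto_const_nhds
    (fun j => (nu_toReal_mem ν hν E j).2)

lemma Lr_union_le (E F : Set X) : Lr 𝒰 ν (E ∪ F) ≤ Lr 𝒰 ν E + Lr 𝒰 ν F := by
  refine le_of_tendsto_of_tendsto' (tendsto_Lr 𝒰 ν hν (E ∪ F))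
    ((tendsto_Lr 𝒰 ν hν E).add (tendsto_Lr 𝒰 ν hν F)) (fun j => ?_)
  have h1 : ν j (E ∪ F) ≤ ν j E + ν j F := measure_union_le E F
  have := ENNReal.toReal_mono (by
      exact ENNReal.add_ne_top.mpr ⟨nu_ne_top ν hν E j, nu_ne_top ν hν F j⟩) h1
  rwa [ENNReal.toReal_add (nu_ne_top ν hν E j) (nu_ne_top ν hν F j)] at this

lemma Lr_union_disjoint {E F : Set X} (hd : Disjoint E F) (hF : MeasurableSet F) :
    Lr 𝒰 ν (E ∪ F) = Lr 𝒰 ν E + Lr 𝒰 ν F := by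
  refine tendsto_nhds_unique (tendsto_Lr 𝒰 ν hν (E ∪ F)) ?_
  have h := (tendsto_Lr 𝒰 ν hν E).add (tendsto_Lr 𝒰 ν hν F)
  apply h.congr
  intro j
  rw [measure_union hd hF, ENNReal.toReal_add (nu_ne_top ν hν E j) (nu_ne_top ν hν F j)]

/-- The infimum of `Lr` over open neighbourhoods: value of the content on a compact `K`. -/
noncomputable def ctReal (K : Set X) : ℝ :=
  ⨅ U : {U : Set X // IsOpen U ∧ K ⊆ U}, Lr 𝒰 ν U.1

instance ctNonempty (K : Set X) : Nonempty {U : Set X // IsOpen U ∧ K ⊆ U} :=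
  ⟨⟨Set.univ, isOpen_univ, Set.subset_univ K⟩⟩

lemma ctReal_bddBelow (K : Set X) :
    BddBelow (Set.range fun U : {U : Set X // IsOpen U ∧ K ⊆ U} => Lr 𝒰 ν U.1) := by
  refine ⟨0, ?_⟩
  rintro r ⟨U, rfl⟩
  exact Lr_nonneg 𝒰 ν hν _

lemma ctReal_le {K U : Set X} (hU : IsOpen U) (hKU : K ⊆ U) :
    ctReal 𝒰 ν K ≤ Lr 𝒰 ν U :=
  ciInf_le (ctReal_bddBelow 𝒰 ν hν K) ⟨U, hU, hKU⟩

lemma le_ctReal {K : Set X} {c : ℝ} (h : ∀ U : Set X, IsOpen U → K ⊆ U → c ≤ Lr 𝒰 ν U) :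
    c ≤ ctReal 𝒰 ν K :=
  le_ciInf fun U => h U.1 U.2.1 U.2.2

lemma ctReal_nonneg (K : Set X) : 0 ≤ ctReal 𝒰 ν K :=
  le_ctReal 𝒰 ν hν fun U hU _ => Lr_nonneg 𝒰 ν hν U

lemma Lr_le_ctReal (K : Set X) : Lr 𝒰 ν K ≤ ctReal 𝒰 ν K :=
  le_ctReal 𝒰 ν hν fun U hU hKU => Lr_mono 𝒰 ν hν hKU

lemma ctReal_mono {K K' : Set X} (h : K ⊆ K') : ctReal 𝒰 ν K ≤ ctReal 𝒰 ν K' :=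
  le_ciInf fun U => ctReal_le 𝒰 ν hν U.2.1 (h.trans U.2.2)

lemma ctReal_union_le (K K' : Set X) :
    ctReal 𝒰 ν (K ∪ K') ≤ ctReal 𝒰 ν K + ctReal 𝒰 ν K' := by
  refine le_of_forall_pos_le_add fun ε hε => ?_
  have h1 : ctReal 𝒰 ν K < ctReal 𝒰 ν K + ε / 2 := by linarith
  have h2 : ctReal 𝒰 ν K' < ctReal 𝒰 ν K' + ε / 2 := by linarith
  obtain ⟨⟨U, hU, hKU⟩, hU2⟩ := exists_lt_of_ciInf_lt h1
  obtain ⟨⟨V, hV, hKV⟩, hV2⟩ := exists_lt_of_ciInf_lt h2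
  have h3 : ctReal 𝒰 ν (K ∪ K') ≤ Lr 𝒰 ν (U ∪ V) :=
    ctReal_le 𝒰 ν hν (hU.union hV) (Set.union_subset_union hKU hKV)
  have h4 := Lr_union_le 𝒰 ν hν U V
  linarith

lemma ctReal_union_disjoint {K K' : Set X} (hK : IsCompact K) (hK' : IsCompact K')
    (hd : Disjoint K K') :
    ctReal 𝒰 ν (K ∪ K') = ctReal 𝒰 ν K + ctReal 𝒰 ν K' := by
  refine le_antisymm (ctReal_union_le 𝒰 ν hν K K') ?_
  obtain ⟨U, V, hU, hV, hKU, hKV, hUV⟩ := SeparatedNhds.of_isCompact_isCompact hK hK' hd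
  refine le_ctReal 𝒰 ν hν fun W hW hKW => ?_
  have e1 : ctReal 𝒰 ν K ≤ Lr 𝒰 ν (W ∩ U) :=
    ctReal_le 𝒰 ν hν (hW.inter hU) (Set.subset_inter ((Set.subset_union_left).trans hKW) hKU)
  have e2 : ctReal 𝒰 ν K' ≤ Lr 𝒰 ν (W ∩ V) :=
    ctReal_le 𝒰 ν hν (hW.inter hV) (Set.subset_inter ((Set.subset_union_right).trans hKW) hKV)
  have e3 : Lr 𝒰 ν ((W ∩ U) ∪ (W ∩ V)) = Lr 𝒰 ν (W ∩ U) + Lr 𝒰 ν (W ∩ V) :=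
    Lr_union_disjoint 𝒰 ν hν (hUV.mono Set.inter_subset_right Set.inter_subset_right)
      ((hW.inter hV).measurableSet)
  have e4 : Lr 𝒰 ν ((W ∩ U) ∪ (W ∩ V)) ≤ Lr 𝒰 ν W :=
    Lr_mono 𝒰 ν hν (by
      rw [← Set.inter_union_distrib_left]
      exact Set.inter_subset_left)
  linarith

/-- The content associated to the ultrafilter limit of the `ν j`. -/
noncomputable def ulimContent : MeasureTheory.Content X where
  toFun K := Real.toNNReal (ctReal 𝒰 ν K.1)
  mono' K K' h := Real.toNNReal_mono (ctReal_mono 𝒰 ν hν h)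
  sup_disjoint' K K' hd _ _ := by
    show (ctReal 𝒰 ν ((K ⊔ K' : TopologicalSpace.Compacts X) : Set X)).toNNReal
      = (ctReal 𝒰 ν K.1).toNNReal + (ctReal 𝒰 ν K'.1).toNNReal
    have hsup : ((K ⊔ K' : TopologicalSpace.Compacts X) : Set X) = (K : Set X) ∪ K' := rfl
    have : ctReal 𝒰 ν ((K ⊔ K' : TopologicalSpace.Compacts X) : Set X)
        = ctReal 𝒰 ν K.1 + ctReal 𝒰 ν K'.1 := by
      rw [hsup]
      exact ctReal_union_disjoint 𝒰 ν hν K.2 K'.2 hd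
    rw [this, Real.toNNReal_add (ctReal_nonneg 𝒰 ν hν _) (ctReal_nonneg 𝒰 ν hν _)]
  sup_le' K K' := by
    have h := ctReal_union_le 𝒰 ν hν K.1 K'.1
    have hsup : ((K ⊔ K' : TopologicalSpace.Compacts X) : Set X) = (K : Set X) ∪ K' := rfl
    calc Real.toNNReal (ctReal 𝒰 ν ((K ⊔ K' : TopologicalSpace.Compacts X) : Set X))
        ≤ Real.toNNReal (ctReal 𝒰 ν K.1 + ctReal 𝒰 ν K'.1) := by
          apply Real.toNNReal_mono
          rw [hsup]
          exact h
      _ = _ := Real.toNNReal_add (ctReal_nonneg 𝒰 ν hν _) (ctReal_nonneg 𝒰 ν hν _)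

lemma ulimContent_regular : (ulimContent 𝒰 ν hν).ContentRegular := by
  intro K
  apply le_antisymm
  · refine le_iInf fun K' => le_iInf fun hKK' => ?_
    have : ctReal 𝒰 ν K.1 ≤ ctReal 𝒰 ν K'.1 :=
      ctReal_mono 𝒰 ν hν (hKK'.trans interior_subset)
    show ((Real.toNNReal (ctReal 𝒰 ν K.1) : ℝ≥0) : ℝ≥0∞)
      ≤ ((Real.toNNReal (ctReal 𝒰 ν K'.1) : ℝ≥0) : ℝ≥0∞)
    exact_mod_cast ENNReal.coe_le_coe.mpr (Real.toNNReal_mono this)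
  · refine ENNReal.le_of_forall_pos_le_add fun ε hε _ => ?_
    have h1 : ctReal 𝒰 ν K.1 < ctReal 𝒰 ν K.1 + ε := by
      have : (0:ℝ) < ε := hε
      linarith
    obtain ⟨⟨U, hU, hKU⟩, hU2⟩ := exists_lt_of_ciInf_lt h1
    obtain ⟨L, hL, hKL, hLU⟩ := exists_compact_between K.2 hU hKU
    have h2 : ctReal 𝒰 ν L ≤ ctReal 𝒰 ν K.1 + ε := le_of_lt (lt_of_le_of_lt
      (ctReal_le 𝒰 ν hν hU hLU) hU2)
    have h3 : (⨅ (K' : TopologicalSpace.Compacts X)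
        (_ : (K : Set X) ⊆ interior (K' : Set X)), ((ulimContent 𝒰 ν hν) K' : ℝ≥0∞))
        ≤ ((ulimContent 𝒰 ν hν) ⟨L, hL⟩ : ℝ≥0∞) := by
      refine le_trans (iInf_le _ ⟨L, hL⟩) ?_
      exact iInf_le _ hKL
    refine h3.trans ?_
    show ((Real.toNNReal (ctReal 𝒰 ν L) : ℝ≥0) : ℝ≥0∞) ≤ _
    calc ((Real.toNNReal (ctReal 𝒰 ν L) : ℝ≥0) : ℝ≥0∞)
        ≤ ((Real.toNNReal (ctReal 𝒰 ν K.1 + (ε:ℝ)) : ℝ≥0) : ℝ≥0∞) := by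
          exact_mod_cast ENNReal.coe_le_coe.mpr (Real.toNNReal_mono h2)
      _ ≤ ((Real.toNNReal (ctReal 𝒰 ν K.1) : ℝ≥0) : ℝ≥0∞) + (ε : ℝ≥0∞) := by
          rw [← ENNReal.coe_add]
          apply ENNReal.coe_le_coe.mpr
          refine le_trans (Real.toNNReal_add_le) ?_
          simp [Real.toNNReal_coe]

/-- The 𝒰-limit measure. -/
noncomputable def ulimMeasure : Measure X := (ulimContent 𝒰 ν hν).measure

lemma ulimMeasure_closed {F : Set X} (hF : IsClosed F) :
    ulimMeasure 𝒰 ν hν F = ENNReal.ofReal (ctReal 𝒰 ν F) := by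
  have h := MeasureTheory.Content.measure_eq_content_of_regular (ulimContent 𝒰 ν hν)
    (ulimContent_regular 𝒰 ν hν) ⟨F, hF.isCompact⟩
  calc ulimMeasure 𝒰 ν hν F
      = (ulimContent 𝒰 ν hν).measure ((⟨F, hF.isCompact⟩ : TopologicalSpace.Compacts X) : Set X) :=
        rfl
    _ = ((ulimContent 𝒰 ν hν).toFun ⟨F, hF.isCompact⟩ : ℝ≥0∞) := h
    _ = ENNReal.ofReal (ctReal 𝒰 ν F) := rfl

lemma ulimMeasure_univ (hp : ∀ᶠ j in (𝒰 : Filter ℕ), ν j Set.univ = 1) :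
    ulimMeasure 𝒰 ν hν Set.univ = 1 := by
  have hLu : Lr 𝒰 ν Set.univ = 1 := by
    refine tendsto_nhds_unique (tendsto_Lr 𝒰 ν hν Set.univ) ?_
    refine Tendsto.congr' ?_ (tendsto_const_nhds (x := (1:ℝ)))
    filter_upwards [hp] with j hj
    rw [hj, ENNReal.toReal_one]
  have hct : ctReal 𝒰 ν Set.univ = 1 := by
    refine le_antisymm ?_ ?_
    · have := ctReal_le 𝒰 ν hν isOpen_univ (Set.Subset.refl Set.univ)
      rwa [hLu] at this
    · rw [← hLu]
      exact Lr_le_ctReal 𝒰 ν hν Set.univ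
  rw [ulimMeasure_closed 𝒰 ν hν isClosed_univ, hct, ENNReal.ofReal_one]

lemma ulimMeasure_prob (hp : ∀ᶠ j in (𝒰 : Filter ℕ), ν j Set.univ = 1) :
    IsProbabilityMeasure (ulimMeasure 𝒰 ν hν) :=
  ⟨ulimMeasure_univ 𝒰 ν hν hp⟩

omit hν in
lemma step_pointwise {g : X → ℝ} {Cg : ℝ} (hCg : 0 < Cg) (hg0 : ∀ x, 0 ≤ g x)
    (hgC : ∀ x, g x ≤ Cg) {m : ℕ} (hm : 1 ≤ m) (x : X) :
    g x - Cg / m ≤ (∑ k ∈ Finset.Icc 1 m,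
        Set.indicator {y | (k : ℝ) * (Cg / m) ≤ g y} (fun _ => Cg / m) x)
      ∧ (∑ k ∈ Finset.Icc 1 m,
        Set.indicator {y | (k : ℝ) * (Cg / m) ≤ g y} (fun _ => Cg / m) x) ≤ g x := by
  have hmR : (0:ℝ) < m := by exact_mod_cast hm
  have hcpos : 0 < Cg / m := div_pos hCg hmR
  set t := g x with ht
  set c := Cg / m with hc
  have ht0 : 0 ≤ t := hg0 x
  set k₀ := ⌊t / c⌋₊ with hk₀
  have hk₀m : k₀ ≤ m := by
    have h1 : t / c ≤ (m : ℝ) := by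
      rw [div_le_iff₀ hcpos]
      calc t ≤ Cg := hgC x
        _ = (m : ℝ) * c := by rw [hc]; field_simp
    calc k₀ ≤ ⌊(m:ℝ)⌋₊ := Nat.floor_le_floor h1
      _ = m := Nat.floor_natCast m
  have hind : ∀ k : ℕ, Set.indicator {y | (k : ℝ) * c ≤ g y} (fun _ => c) x
      = if k ≤ k₀ then c else 0 := by
    intro k
    have hiff : x ∈ {y | (k : ℝ) * c ≤ g y} ↔ k ≤ k₀ := by
      rw [Set.mem_setOf_eq, hk₀, Nat.le_floor_iff (div_nonneg ht0 hcpos.le),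
        le_div_iff₀ hcpos]
    by_cases h : k ≤ k₀
    · rw [if_pos h, Set.indicator_of_mem (hiff.mpr h)]
    · rw [if_neg h, Set.indicator_of_notMem (fun hx => h (hiff.mp hx))]
  have hsum : (∑ k ∈ Finset.Icc 1 m,
      Set.indicator {y | (k : ℝ) * c ≤ g y} (fun _ => c) x) = (k₀ : ℝ) * c := by
    rw [Finset.sum_congr rfl fun k _ => hind k, ← Finset.sum_filter]
    have hfil : (Finset.Icc 1 m).filter (· ≤ k₀) = Finset.Icc 1 k₀ := by
      ext k
      simp only [Finset.mem_filter, Finset.mem_Icc]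
      omega
    rw [hfil, Finset.sum_const, Nat.card_Icc]
    simp [nsmul_eq_mul]
  rw [hsum]
  constructor
  · have h2 : t / c < (k₀ : ℝ) + 1 := Nat.lt_floor_add_one _
    have h3 : t < ((k₀ : ℝ) + 1) * c := by
      rw [← div_lt_iff₀ hcpos] at *
      exact h2
    nlinarith
  · have h4 : (k₀ : ℝ) ≤ t / c := Nat.floor_le (div_nonneg ht0 hcpos.le)
    calc (k₀ : ℝ) * c ≤ (t / c) * c := by nlinarith
      _ = t := by field_simp

omit hν in
lemma step_integrable {g : X → ℝ} (hg : Continuous g) (c : ℝ) (m : ℕ)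
    (ρ : Measure X) [IsFiniteMeasure ρ] :
    Integrable (fun x => ∑ k ∈ Finset.Icc 1 m,
      Set.indicator {y | (k : ℝ) * c ≤ g y} (fun _ => c) x) ρ := by
  apply MeasureTheory.integrable_finset_sum
  intro k _
  exact (MeasureTheory.integrable_const c).indicator
    (isClosed_le continuous_const hg).measurableSet

omit hν in
lemma step_integral {g : X → ℝ} (hg : Continuous g) (c : ℝ) (m : ℕ)
    (ρ : Measure X) [IsFiniteMeasure ρ] :
    (∫ x, (∑ k ∈ Finset.Icc 1 m,
        Set.indicator {y | (k : ℝ) * c ≤ g y} (fun _ => c) x) ∂ρ)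
      = ∑ k ∈ Finset.Icc 1 m, (ρ {y | (k : ℝ) * c ≤ g y}).toReal * c := by
  rw [MeasureTheory.integral_finset_sum]
  · refine Finset.sum_congr rfl fun k _ => ?_
    rw [MeasureTheory.integral_indicator_const c
      (isClosed_le continuous_const hg).measurableSet, smul_eq_mul]
    rfl
  · intro k _
    exact (MeasureTheory.integrable_const c).indicator
      (isClosed_le continuous_const hg).measurableSet

lemma le_integral_ulimMeasure (hp : ∀ᶠ j in (𝒰 : Filter ℕ), ν j Set.univ = 1)
    {g : X → ℝ} (hg : Continuous g) (hg0 : ∀ x, 0 ≤ g x) {lg : ℝ}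
    (hlg : Tendsto (fun j => ∫ x, g x ∂(ν j)) 𝒰 (𝓝 lg)) :
    lg ≤ ∫ x, g x ∂(ulimMeasure 𝒰 ν hν) := by
  haveI := ulimMeasure_prob 𝒰 ν hν hp
  obtain ⟨Cg, hCgpos, hCg⟩ := cont_bound hg
  have hgC : ∀ x, g x ≤ Cg := fun x => (le_abs_self _).trans (hCg x)
  have key : ∀ m : ℕ, 1 ≤ m → lg - Cg / m ≤ ∫ x, g x ∂(ulimMeasure 𝒰 ν hν) := by
    intro m hm
    have hmR : (0:ℝ) < m := by exact_mod_cast hm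
    set c := Cg / m with hc
    set sfun := fun x => ∑ k ∈ Finset.Icc 1 m,
      Set.indicator {y | (k : ℝ) * c ≤ g y} (fun _ => c) x with hsfun
    have hsle : ∀ x, sfun x ≤ g x := fun x => (step_pointwise hCgpos hg0 hgC hm x).2
    have hsge : ∀ x, g x - c ≤ sfun x := fun x => (step_pointwise hCgpos hg0 hgC hm x).1
    -- ∫ sfun dμ ≤ ∫ g dμ
    have h1 : ∫ x, sfun x ∂(ulimMeasure 𝒰 ν hν) ≤ ∫ x, g x ∂(ulimMeasure 𝒰 ν hν) :=
      MeasureTheory.integral_mono (step_integrable hg c m _)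
        (cont_integrable hg _) hsle
    -- Σ c · Lr(F k) ≤ ∫ sfun dμ
    have h2 : (∑ k ∈ Finset.Icc 1 m, Lr 𝒰 ν {y | (k : ℝ) * c ≤ g y} * c)
        ≤ ∫ x, sfun x ∂(ulimMeasure 𝒰 ν hν) := by
      rw [step_integral hg c m _]
      refine Finset.sum_le_sum fun k _ => ?_
      have hcl : IsClosed {y | (k : ℝ) * c ≤ g y} := isClosed_le continuous_const hg
      have : (ulimMeasure 𝒰 ν hν {y | (k : ℝ) * c ≤ g y}).toReal
          = ctReal 𝒰 ν {y | (k : ℝ) * c ≤ g y} := by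
        rw [ulimMeasure_closed 𝒰 ν hν hcl,
          ENNReal.toReal_ofReal (ctReal_nonneg 𝒰 ν hν _)]
      rw [this]
      exact mul_le_mul_of_nonneg_right (Lr_le_ctReal 𝒰 ν hν _)
        (le_of_lt (div_pos hCgpos hmR))
    -- tendsto of ∫ sfun dν j
    have h3 : Tendsto (fun j => ∫ x, sfun x ∂(ν j)) 𝒰
        (𝓝 (∑ k ∈ Finset.Icc 1 m, Lr 𝒰 ν {y | (k : ℝ) * c ≤ g y} * c)) := by
      have := tendsto_finset_sum (Finset.Icc 1 m)
        (fun k _ => (tendsto_Lr 𝒰 ν hν {y | (k : ℝ) * c ≤ g y}).mul_const c)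
      apply this.congr
      intro j
      haveI : IsFiniteMeasure (ν j) := ⟨lt_of_le_of_lt (hν j) ENNReal.one_lt_top⟩
      rw [step_integral hg c m _]
    -- eventual lower bound
    have h4 : ∀ᶠ j in (𝒰 : Filter ℕ), (∫ x, g x ∂(ν j)) - c ≤ ∫ x, sfun x ∂(ν j) := by
      filter_upwards [hp] with j hj
      haveI : IsProbabilityMeasure (ν j) := ⟨hj⟩
      have e1 : (∫ x, g x ∂(ν j)) - c = ∫ x, (g x - c) ∂(ν j) := by
        rw [MeasureTheory.integral_sub (cont_integrable hg _)
          (MeasureTheory.integrable_const c), MeasureTheory.integral_const]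
        simp
      rw [e1]
      exact MeasureTheory.integral_mono
        ((cont_integrable hg _).sub (MeasureTheory.integrable_const c))
        (step_integrable hg c m _) hsge
    have h5 : lg - c ≤ ∑ k ∈ Finset.Icc 1 m, Lr 𝒰 ν {y | (k : ℝ) * c ≤ g y} * c :=
      le_of_tendsto_of_tendsto (hlg.sub_const c) h3 h4
    linarith
  have htend : Tendsto (fun m : ℕ => lg - Cg * ((m:ℝ))⁻¹) atTop (𝓝 lg) := by
    have := tendsto_const_nhds (x := lg) (f := atTop (α := ℕ)) |>.sub
      ((tendsto_const_nhds (x := Cg) (f := atTop (α := ℕ))).mul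
        tendsto_inv_atTop_nhds_zero_nat)
    rwa [mul_zero, sub_zero] at this
  refine le_of_tendsto htend ?_
  filter_upwards [eventually_ge_atTop 1] with m hm
  have := key m hm
  rwa [div_eq_mul_inv] at this

lemma integral_ulimMeasure (hp : ∀ᶠ j in (𝒰 : Filter ℕ), ν j Set.univ = 1)
    {f : X → ℝ} (hf : Continuous f) {l : ℝ}
    (hl : Tendsto (fun j => ∫ x, f x ∂(ν j)) 𝒰 (𝓝 l)) :
    ∫ x, f x ∂(ulimMeasure 𝒰 ν hν) = l := by
  haveI := ulimMeasure_prob 𝒰 ν hν hp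
  obtain ⟨C, hCpos, hC⟩ := cont_bound hf
  have int_add : ∀ (ρ : Measure X), IsProbabilityMeasure ρ → (∀ b : ℝ,
      ∫ x, (b + f x) ∂ρ = b + ∫ x, f x ∂ρ ∧ ∫ x, (b - f x) ∂ρ = b - ∫ x, f x ∂ρ) := by
    intro ρ hρ b
    constructor
    · rw [MeasureTheory.integral_add (MeasureTheory.integrable_const b)
        (cont_integrable hf _), MeasureTheory.integral_const]
      simp
    · rw [MeasureTheory.integral_sub (MeasureTheory.integrable_const b)
        (cont_integrable hf _), MeasureTheory.integral_const]
      simp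
  have hle1 : l ≤ ∫ x, f x ∂(ulimMeasure 𝒰 ν hν) := by
    have h1 : Tendsto (fun j => ∫ x, (C + f x) ∂(ν j)) 𝒰 (𝓝 (C + l)) := by
      refine Tendsto.congr' ?_ (hl.const_add C)
      filter_upwards [hp] with j hj
      exact ((int_add (ν j) ⟨hj⟩ C).1).symm
    have h2 := le_integral_ulimMeasure 𝒰 ν hν hp
      (g := fun x => C + f x) (continuous_const.add hf) (fun x => by
        have := hC x
        have := abs_le.mp this
        linarith [this.1]) h1
    rw [(int_add _ (ulimMeasure_prob 𝒰 ν hν hp) C).1] at h2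
    linarith
  have hle2 : ∫ x, f x ∂(ulimMeasure 𝒰 ν hν) ≤ l := by
    have h1 : Tendsto (fun j => ∫ x, (C - f x) ∂(ν j)) 𝒰 (𝓝 (C - l)) := by
      refine Tendsto.congr' ?_ (hl.const_sub C)
      filter_upwards [hp] with j hj
      exact ((int_add (ν j) ⟨hj⟩ C).2).symm
    have h2 := le_integral_ulimMeasure 𝒰 ν hν hp
      (g := fun x => C - f x) (continuous_const.sub hf) (fun x => by
        have := abs_le.mp (hC x)
        linarith [this.2]) h1
    rw [(int_add _ (ulimMeasure_prob 𝒰 ν hν hp) C).2] at h2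
    linarith
  linarith

lemma ulimMeasure_map {T : X → X} (hT : Continuous T)
    (hTLr : ∀ U : Set X, IsOpen U → Lr 𝒰 ν (T ⁻¹' U) = Lr 𝒰 ν U) :
    Measure.map T (ulimMeasure 𝒰 ν hν) = ulimMeasure 𝒰 ν hν := by
  have hct : ∀ F : Set X, IsClosed F → ctReal 𝒰 ν (T ⁻¹' F) = ctReal 𝒰 ν F := by
    intro F hF
    apply le_antisymm
    · refine le_ctReal 𝒰 ν hν fun U hU hFU => ?_
      calc ctReal 𝒰 ν (T ⁻¹' F) ≤ Lr 𝒰 ν (T ⁻¹' U) :=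
            ctReal_le 𝒰 ν hν (hU.preimage hT) (Set.preimage_mono hFU)
        _ = Lr 𝒰 ν U := hTLr U hU
    · refine le_ctReal 𝒰 ν hν fun V hV hFV => ?_
      have hUopen : IsOpen (T '' Vᶜ)ᶜ := by
        rw [isOpen_compl_iff]
        exact (((isClosed_compl_iff.mpr hV).isCompact).image hT).isClosed
      have hFU : F ⊆ (T '' Vᶜ)ᶜ := by
        intro y hy hmem
        obtain ⟨w, hw, rfl⟩ := hmem
        exact hw (hFV hy)
      have hUV : T ⁻¹' (T '' Vᶜ)ᶜ ⊆ V := by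
        intro x hx
        by_contra hxV
        exact hx ⟨x, hxV, rfl⟩
      calc ctReal 𝒰 ν F ≤ Lr 𝒰 ν (T '' Vᶜ)ᶜ := ctReal_le 𝒰 ν hν hUopen hFU
        _ = Lr 𝒰 ν (T ⁻¹' (T '' Vᶜ)ᶜ) := (hTLr _ hUopen).symm
        _ ≤ Lr 𝒰 ν V := Lr_mono 𝒰 ν hν hUV
  have hmeas : Measurable T := hT.measurable
  haveI : IsFiniteMeasure (ulimMeasure 𝒰 ν hν) := by
    constructor
    rw [ulimMeasure_closed 𝒰 ν hν isClosed_univ]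
    exact ENNReal.ofReal_lt_top
  haveI : IsFiniteMeasure (Measure.map T (ulimMeasure 𝒰 ν hν)) :=
    MeasureTheory.Measure.isFiniteMeasure_map _ T
  refine MeasureTheory.ext_of_generate_finite {s : Set X | IsClosed s} ?_ ?_ ?_ ?_
  · rw [BorelSpace.measurable_eq (α := X)]
    exact borel_eq_generateFrom_isClosed
  · intro s hs t ht _
    exact hs.inter ht
  · intro s hs
    rw [Measure.map_apply hmeas hs.measurableSet,
      ulimMeasure_closed 𝒰 ν hν (hs.preimage hT), ulimMeasure_closed 𝒰 ν hν hs, hct s hs]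
  · rw [Measure.map_apply hmeas MeasurableSet.univ, Set.preimage_univ]

omit hν in
lemma msupport_compl_null [SecondCountableTopology X] (μ : Measure X) :
    μ ((msupport μ)ᶜ) = 0 := by
  obtain ⟨B, hBc, -, hBbasis⟩ := TopologicalSpace.exists_countable_basis X
  have heq : (msupport μ)ᶜ = ⋃ U ∈ {U ∈ B | μ U = 0}, U := by
    ext x
    constructor
    · intro hx
      have hx' : ¬ (∀ U : Set X, IsOpen U → x ∈ U → 0 < μ U) := hx
      push_neg at hx'
      obtain ⟨U, hUopen, hxU, hU0⟩ := hx'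
      have hμU0 : μ U = 0 := le_antisymm hU0 zero_le
      obtain ⟨V, hVB, hxV, hVU⟩ := hBbasis.exists_subset_of_mem_open hxU hUopen
      have : μ V = 0 := le_antisymm (le_trans (measure_mono hVU) (le_of_eq hμU0)) zero_le
      exact Set.mem_biUnion ⟨hVB, this⟩ hxV
    · intro hx
      obtain ⟨V, hV, hxV⟩ := Set.mem_iUnion₂.mp hx
      intro hsupp
      have := hsupp V (hBbasis.isOpen hV.1) hxV
      rw [hV.2] at this
      exact lt_irrefl 0 this
  rw [heq]
  rw [measure_biUnion_null_iff (hBc.mono (Set.sep_subset _ _))]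
  exact fun U hU => hU.2

end UlimMeasure

section ERealAux

lemma epos_coe (r : ℝ) : epos (r : EReal) = ENNReal.ofReal r := by
  rw [epos, if_neg (EReal.coe_ne_top r), EReal.toReal_coe]

lemma epos_bot : epos (⊥ : EReal) = 0 := by
  rw [epos, if_neg bot_ne_top]
  simp

lemma epos_mono {x y : EReal} (h : x ≤ y) : epos x ≤ epos y := by
  rcases eq_or_ne y ⊤ with hy | hy
  · subst hy
    have h2 : epos (⊤:EReal) = ⊤ := by rw [epos, if_pos rfl]
    rw [h2]; exact le_top
  · have hx : x ≠ ⊤ := fun hx => hy (top_le_iff.mp (hx ▸ h))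
    rw [epos, if_neg hx, epos, if_neg hy]
    rcases eq_or_ne x ⊥ with hb | hb
    · rw [hb]
      simp
    · exact ENNReal.ofReal_le_ofReal (EReal.toReal_le_toReal h hb hy)

lemma epos_nonpos {x : EReal} (h : x ≤ 0) : epos x = 0 := by
  have := epos_mono h
  rw [show ((0:EReal)) = ((0:ℝ) : EReal) from rfl, epos_coe, ENNReal.ofReal_zero] at this
  exact le_antisymm this zero_le

lemma coe_ennreal_eq {P : ℝ≥0∞} (hP : P ≠ ⊤) : (P : EReal) = ((P.toReal : ℝ) : EReal) := by
  conv_lhs => rw [← ENNReal.ofReal_toReal hP]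
  rw [EReal.coe_ennreal_ofReal, max_eq_left ENNReal.toReal_nonneg]

variable {Y : Type*} [MeasurableSpace Y] (μ : Measure Y) [IsProbabilityMeasure μ]

lemma eInt_le_const (f : Y → EReal) (c : ℝ) (h : ∀ y, f y ≤ (c : EReal)) :
    eInt μ f ≤ (c : EReal) := by
  rcases le_or_gt 0 c with hc | hc
  · have hP : (∫⁻ y, epos (f y) ∂μ) ≤ ENNReal.ofReal c := by
      calc (∫⁻ y, epos (f y) ∂μ) ≤ ∫⁻ _, ENNReal.ofReal c ∂μ :=
            lintegral_mono fun y => by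
              rw [← epos_coe]
              exact epos_mono (h y)
        _ = ENNReal.ofReal c := by rw [lintegral_const, measure_univ, mul_one]
    have h1 : ((∫⁻ y, epos (f y) ∂μ : ℝ≥0∞) : EReal) ≤ ((ENNReal.ofReal c : ℝ≥0∞) : EReal) :=
      EReal.coe_ennreal_le_coe_ennreal_iff.mpr hP
    have h2 : ((ENNReal.ofReal c : ℝ≥0∞) : EReal) = (c : EReal) := by
      rw [EReal.coe_ennreal_ofReal, max_eq_left hc]
    calc eInt μ f ≤ ((∫⁻ y, epos (f y) ∂μ : ℝ≥0∞) : EReal) - ((0 : ℝ≥0∞) : EReal) := by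
          exact EReal.sub_le_sub (le_refl _) (by simp [EReal.coe_ennreal_nonneg])
      _ = ((∫⁻ y, epos (f y) ∂μ : ℝ≥0∞) : EReal) := by
          simp
      _ ≤ (c : EReal) := h1.trans_eq h2
  · have hP0 : (∫⁻ y, epos (f y) ∂μ) = 0 := by
      rw [← lintegral_zero (μ := μ)]
      refine lintegral_congr fun y => ?_
      exact epos_nonpos ((h y).trans (by exact_mod_cast EReal.coe_le_coe_iff.mpr hc.le))
    have hN : ENNReal.ofReal (-c) ≤ (∫⁻ y, epos (-f y) ∂μ) := by
      calc ENNReal.ofReal (-c) = ∫⁻ _, ENNReal.ofReal (-c) ∂μ := by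
            rw [lintegral_const, measure_univ, mul_one]
        _ ≤ _ := lintegral_mono fun y => by
            rw [← epos_coe]
            refine epos_mono ?_
            rw [show ((-c : ℝ) : EReal) = -(c : EReal) from rfl]
            exact EReal.neg_le_neg_iff.mpr (h y)
    rw [eInt, hP0]
    have h3 : ((0 : ℝ≥0∞) : EReal) - ((∫⁻ y, epos (-f y) ∂μ : ℝ≥0∞) : EReal)
        ≤ ((0 : ℝ≥0∞) : EReal) - ((ENNReal.ofReal (-c) : ℝ≥0∞) : EReal) :=
      EReal.sub_le_sub (le_refl _) (EReal.coe_ennreal_le_coe_ennreal_iff.mpr hN)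
    refine h3.trans ?_
    rw [EReal.coe_ennreal_ofReal, max_eq_left (by linarith), EReal.coe_ennreal_zero]
    rw [zero_sub, ← EReal.coe_neg, neg_neg]

lemma eInt_elog_eq (g : Y → ℝ) (hg : Measurable g) (hg0 : ∀ y, 0 ≤ g y) {Gb : ℝ}
    (hgb : ∀ y, g y ≤ Gb) {c₀ : ℝ}
    (hint : ∀ j : ℕ, Integrable (fun y => Real.log (max (g y) (Real.exp (-(j:ℝ))))) μ)
    (hc₀ : ∀ j : ℕ, c₀ ≤ ∫ y, Real.log (max (g y) (Real.exp (-(j:ℝ)))) ∂μ) :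
    ∃ r : ℝ, eInt μ (fun y => elog (g y)) = (r : EReal) ∧ c₀ ≤ r := by
  set P := ∫⁻ y, epos (elog (g y)) ∂μ with hP
  set Nf := fun y => epos (-(elog (g y))) with hNf
  set N := ∫⁻ y, Nf y ∂μ with hN
  have hgy : ∀ y, g y ≤ 0 → elog (g y) = ⊥ := fun y hy => by rw [elog, if_pos hy]
  have hgy' : ∀ y, 0 < g y → elog (g y) = ((Real.log (g y) : ℝ) : EReal) :=
    fun y hy => by rw [elog, if_neg (not_le.mpr hy)]
  -- positive parts agree
  have hPagree : ∀ j : ℕ, ∀ y, ENNReal.ofReal (Real.log (max (g y) (Real.exp (-(j:ℝ)))))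
      = epos (elog (g y)) := by
    intro j y
    have hej : (0:ℝ) < Real.exp (-(j:ℝ)) := Real.exp_pos _
    have hejle : Real.exp (-(j:ℝ)) ≤ 1 := by
      rw [Real.exp_le_one_iff]
      simp
    rcases le_or_gt (g y) 0 with hy | hy
    · rw [hgy y hy, epos_bot, max_eq_right (hy.trans hej.le)]
      rw [Real.log_exp]
      rw [ENNReal.ofReal_eq_zero]
      simp
    · rw [hgy' y hy, epos_coe]
      rcases le_or_gt (Real.exp (-(j:ℝ))) (g y) with h1 | h1
      · rw [max_eq_left h1]
      · rw [max_eq_right h1.le, Real.log_exp]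
        have h2 : Real.log (g y) ≤ 0 := by
          calc Real.log (g y) ≤ Real.log (Real.exp (-(j:ℝ))) :=
                Real.log_le_log hy h1.le
            _ = -(j:ℝ) := Real.log_exp _
            _ ≤ 0 := by simp
        rw [ENNReal.ofReal_eq_zero.mpr h2, ENNReal.ofReal_eq_zero]
        simp
  -- negative parts: truncation
  have hNagree : ∀ j : ℕ, ∀ y, ENNReal.ofReal (-(Real.log (max (g y) (Real.exp (-(j:ℝ))))))
      = min (Nf y) (ENNReal.ofReal (j:ℝ)) := by
    intro j y
    have hej : (0:ℝ) < Real.exp (-(j:ℝ)) := Real.exp_pos _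
    rcases le_or_gt (g y) 0 with hy | hy
    · rw [hNf]
      simp only []
      rw [hgy y hy, max_eq_right (hy.trans hej.le), Real.log_exp, neg_neg]
      have : (-(⊥ : EReal)) = ⊤ := by simp
      rw [this, epos, if_pos rfl]
      rw [min_eq_right le_top]
    · rw [hNf]
      simp only []
      rw [hgy' y hy]
      have hcoe : (-(((Real.log (g y) : ℝ)) : EReal)) = ((-Real.log (g y) : ℝ) : EReal) := by
        rw [EReal.coe_neg]
      rw [hcoe, epos_coe]
      rcases le_or_gt (Real.exp (-(j:ℝ))) (g y) with h1 | h1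
      · rw [max_eq_left h1]
        have h2 : -Real.log (g y) ≤ (j:ℝ) := by
          have := Real.log_le_log hej h1
          rw [Real.log_exp] at this
          linarith
        rw [min_eq_left (ENNReal.ofReal_le_ofReal h2)]
      · rw [max_eq_right h1.le, Real.log_exp, neg_neg]
        have h2 : (j:ℝ) ≤ -Real.log (g y) := by
          have := Real.log_le_log hy h1.le
          rw [Real.log_exp] at this
          linarith
        rw [min_eq_right (ENNReal.ofReal_le_ofReal h2)]
  -- measurability of Nf
  have hNfmeas : Measurable Nf := by
    have heq : Nf = fun y => if g y ≤ 0 then (⊤ : ℝ≥0∞)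
        else ENNReal.ofReal (-Real.log (g y)) := by
      funext y
      rcases le_or_gt (g y) 0 with hy | hy
      · rw [if_pos hy, hNf]; simp only []
        rw [hgy y hy]
        have : (-(⊥ : EReal)) = ⊤ := by simp
        rw [this, epos, if_pos rfl]
      · rw [if_neg (not_le.mpr hy), hNf]; simp only []
        rw [hgy' y hy, ← EReal.coe_neg, epos_coe]
    rw [heq]
    exact Measurable.ite (hg measurableSet_Iic) measurable_const
      ((Real.measurable_log.comp hg).neg.ennreal_ofReal)
  -- P is finite
  have hPfin : P ≠ ⊤ := by
    have hb : ∀ y, epos (elog (g y)) ≤ ENNReal.ofReal (Real.log (max Gb 1)) := by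
      intro y
      rcases le_or_gt (g y) 0 with hy | hy
      · rw [hgy y hy, epos_bot]; exact zero_le
      · rw [hgy' y hy, epos_coe]
        apply ENNReal.ofReal_le_ofReal
        apply Real.log_le_log hy
        exact (hgb y).trans (le_max_left _ _)
    have : P ≤ ENNReal.ofReal (Real.log (max Gb 1)) := by
      calc P ≤ ∫⁻ _, ENNReal.ofReal (Real.log (max Gb 1)) ∂μ := lintegral_mono hb
        _ = _ := by rw [lintegral_const, measure_univ, mul_one]
    exact (this.trans_lt ENNReal.ofReal_lt_top).ne
  -- truncated negative integrals
  set Nt := fun j : ℕ => ∫⁻ y, min (Nf y) (ENNReal.ofReal (j:ℝ)) ∂μ with hNt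
  have hNtfin : ∀ j, Nt j ≤ ENNReal.ofReal (j:ℝ) := by
    intro j
    calc Nt j ≤ ∫⁻ _, ENNReal.ofReal (j:ℝ) ∂μ := lintegral_mono fun y => min_le_right _ _
      _ = _ := by rw [lintegral_const, measure_univ, mul_one]
  have hmct : N = ⨆ j : ℕ, Nt j := by
    rw [hN]
    have : ∀ y, Nf y = ⨆ j : ℕ, min (Nf y) (ENNReal.ofReal (j:ℝ)) := by
      intro y
      refine le_antisymm ?_ (iSup_le fun j => min_le_left _ _)
      rcases eq_or_ne (Nf y) ⊤ with hy | hy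
      · rw [hy]
        have h2 : ∀ j : ℕ, min (⊤ : ℝ≥0∞) (ENNReal.ofReal (j:ℝ)) = ENNReal.ofReal (j:ℝ) :=
          fun j => min_eq_right le_top
        calc (⊤:ℝ≥0∞) = ⨆ j : ℕ, (j : ℝ≥0∞) := ENNReal.iSup_natCast.symm
          _ ≤ _ := iSup_mono fun j => by rw [h2 j, ENNReal.ofReal_natCast]
      · obtain ⟨j, hj⟩ := ENNReal.exists_nat_gt (lt_top_iff_ne_top.mpr hy).ne
        refine le_iSup_of_le j ?_
        rw [ENNReal.ofReal_natCast, min_eq_left hj.le]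
    calc ∫⁻ y, Nf y ∂μ = ∫⁻ y, ⨆ j : ℕ, min (Nf y) (ENNReal.ofReal (j:ℝ)) ∂μ :=
          lintegral_congr this
      _ = ⨆ j : ℕ, Nt j := by
          rw [lintegral_iSup (fun j => hNfmeas.min measurable_const)
            (fun j k hjk y => min_le_min (le_refl _)
              (ENNReal.ofReal_le_ofReal (by exact_mod_cast hjk)))]
  -- integral identity
  have hii : ∀ j : ℕ, (∫ y, Real.log (max (g y) (Real.exp (-(j:ℝ)))) ∂μ)
      = P.toReal - (Nt j).toReal := by
    intro j
    rw [MeasureTheory.integral_eq_lintegral_pos_part_sub_lintegral_neg_part (hint j)]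
    congr 1
    · congr 1
      exact lintegral_congr fun y => hPagree j y
    · congr 1
      exact lintegral_congr fun y => hNagree j y
  have hNtle : ∀ j : ℕ, (Nt j).toReal ≤ P.toReal - c₀ := by
    intro j
    have := hc₀ j
    rw [hii j] at this
    linarith
  have hNfin : N ≤ ENNReal.ofReal (P.toReal - c₀) := by
    rw [hmct]
    refine iSup_le fun j => ?_
    have hjfin : Nt j ≠ ⊤ := ((hNtfin j).trans_lt ENNReal.ofReal_lt_top).ne
    calc Nt j = ENNReal.ofReal ((Nt j).toReal) := (ENNReal.ofReal_toReal hjfin).symm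
      _ ≤ _ := ENNReal.ofReal_le_ofReal (hNtle j)
  have hNne : N ≠ ⊤ := (hNfin.trans_lt ENNReal.ofReal_lt_top).ne
  refine ⟨P.toReal - N.toReal, ?_, ?_⟩
  · show (((∫⁻ y, epos (elog (g y)) ∂μ : ℝ≥0∞)) : EReal)
        - ((∫⁻ y, epos (-(elog (g y))) ∂μ : ℝ≥0∞) : EReal) = _
    rw [show (∫⁻ y, epos (elog (g y)) ∂μ) = P from rfl]
    rw [show (∫⁻ y, epos (-(elog (g y))) ∂μ) = N from rfl]
    rw [coe_ennreal_eq hPfin, coe_ennreal_eq hNne, ← EReal.coe_sub]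
  · have h0 : 0 ≤ P.toReal - c₀ := le_trans (ENNReal.toReal_nonneg) (hNtle 0)
    have : N.toReal ≤ P.toReal - c₀ := by
      rw [← ENNReal.toReal_ofReal h0]
      exact ENNReal.toReal_mono (by simp) hNfin
    linarith

end ERealAux

section Emp

variable {I : Type*} [MetricSpace I] [CompactSpace I] [Nonempty I]
  [MeasurableSpace I] [BorelSpace I]

lemma continuous_shft : Continuous (shft : (ℕ → I) → (ℕ → I)) :=
  continuous_pi fun n => continuous_apply (n + 1)

lemma measurable_shft : Measurable (shft : (ℕ → I) → (ℕ → I)) :=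
  (continuous_shft).measurable

/-- Empirical measures along the orbit of `z`. -/
noncomputable def emp (z : ℕ → I) (j : ℕ) : Measure (ℕ → I) :=
  (j : ℝ≥0∞)⁻¹ • ∑ k ∈ Finset.range j, Measure.dirac (shft^[k] z)

variable (z : ℕ → I)

lemma emp_univ {j : ℕ} (hj : 1 ≤ j) : emp z j Set.univ = 1 := by
  rw [emp, Measure.smul_apply, Measure.finset_sum_apply, smul_eq_mul]
  have : ∀ k ∈ Finset.range j, Measure.dirac (shft^[k] z) Set.univ = 1 :=
    fun k _ => measure_univ
  rw [Finset.sum_congr rfl this, Finset.sum_const, Finset.card_range, nsmul_eq_mul, mul_one]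
  rw [ENNReal.inv_mul_cancel]
  · exact Nat.cast_ne_zero.mpr (by omega)
  · exact ENNReal.natCast_ne_top j

lemma emp_le_one (j : ℕ) : emp z j Set.univ ≤ 1 := by
  rcases Nat.eq_zero_or_pos j with hj | hj
  · subst hj
    rw [emp]
    simp
  · rw [emp_univ z hj]

lemma emp_prob {j : ℕ} (hj : 1 ≤ j) : IsProbabilityMeasure (emp z j) :=
  ⟨emp_univ z hj⟩

lemma emp_finite (j : ℕ) : IsFiniteMeasure (emp z j) :=
  ⟨lt_of_le_of_lt (emp_le_one z j) ENNReal.one_lt_top⟩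

lemma emp_integral {f : (ℕ → I) → ℝ} (hf : Continuous f) (j : ℕ) :
    ∫ x, f x ∂(emp z j) = (j : ℝ)⁻¹ * ∑ k ∈ Finset.range j, f (shft^[k] z) := by
  rw [emp, MeasureTheory.integral_smul_measure]
  rw [MeasureTheory.integral_finset_sum_measure (fun k _ => cont_integrable hf _)]
  have : ∀ k ∈ Finset.range j, ∫ x, f x ∂(Measure.dirac (shft^[k] z)) = f (shft^[k] z) :=
    fun k _ => MeasureTheory.integral_dirac f _
  rw [Finset.sum_congr rfl this, smul_eq_mul, ENNReal.toReal_inv, ENNReal.toReal_natCast]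

lemma emp_apply_toReal {E : Set (ℕ → I)} (hE : MeasurableSet E) (j : ℕ) :
    (emp z j E).toReal
      = (j : ℝ)⁻¹ * ∑ k ∈ Finset.range j,
          Set.indicator E (fun _ => (1:ℝ)) (shft^[k] z) := by
  rw [emp, Measure.smul_apply, Measure.finset_sum_apply, smul_eq_mul]
  have hsum : (∑ k ∈ Finset.range j, Measure.dirac (shft^[k] z) E)
      = ∑ k ∈ Finset.range j, Set.indicator E (fun _ => (1:ℝ≥0∞)) (shft^[k] z) := by
    refine Finset.sum_congr rfl fun k _ => ?_
    rw [Measure.dirac_apply' _ hE]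
    by_cases h : shft^[k] z ∈ E
    · rw [Set.indicator_of_mem h, Set.indicator_of_mem h]; rfl
    · rw [Set.indicator_of_notMem h, Set.indicator_of_notMem h]
  rw [hsum, ENNReal.toReal_mul, ENNReal.toReal_inv, ENNReal.toReal_natCast]
  congr 1
  rw [ENNReal.toReal_sum (fun k _ => by
    by_cases h : shft^[k] z ∈ E
    · rw [Set.indicator_of_mem h]; simp
    · rw [Set.indicator_of_notMem h]; simp)]
  refine Finset.sum_congr rfl fun k _ => ?_
  by_cases h : shft^[k] z ∈ E
  · rw [Set.indicator_of_mem h, Set.indicator_of_mem h]; simp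
  · rw [Set.indicator_of_notMem h, Set.indicator_of_notMem h]; simp

lemma emp_shift_diff {E : Set (ℕ → I)} (hE : MeasurableSet E) (j : ℕ) :
    |(emp z j (shft ⁻¹' E)).toReal - (emp z j E).toReal| ≤ 2 * (j:ℝ)⁻¹ := by
  have hmE : MeasurableSet (shft ⁻¹' E) := measurable_shft hE
  rw [emp_apply_toReal z hmE j, emp_apply_toReal z hE j]
  set χ : ℕ → ℝ := fun k => Set.indicator E (fun _ => (1:ℝ)) (shft^[k] z) with hχ
  have hmem : ∀ k, (shft^[k] z ∈ shft ⁻¹' E) ↔ shft^[k+1] z ∈ E := by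
    intro k
    rw [Set.mem_preimage, ← Function.iterate_succ_apply' shft k z]
  have hsum1 : (∑ k ∈ Finset.range j, Set.indicator (shft ⁻¹' E) (fun _ => (1:ℝ)) (shft^[k] z))
      = ∑ k ∈ Finset.range j, χ (k+1) := by
    refine Finset.sum_congr rfl fun k _ => ?_
    rw [hχ]
    by_cases h : shft^[k+1] z ∈ E
    · rw [Set.indicator_of_mem ((hmem k).mpr h)]
      simp only []
      rw [Set.indicator_of_mem h]
    · rw [Set.indicator_of_notMem (fun hc => h ((hmem k).mp hc))]
      simp only []
      rw [Set.indicator_of_notMem h]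
  rw [hsum1, ← mul_sub, abs_mul]
  have htel : (∑ k ∈ Finset.range j, χ (k+1)) - (∑ k ∈ Finset.range j, χ k)
      = χ j - χ 0 := by
    rw [← Finset.sum_sub_distrib]
    exact Finset.sum_range_sub χ j
  rw [htel]
  have hχbd : ∀ k, |χ k| ≤ 1 := by
    intro k
    rw [hχ]
    by_cases h : shft^[k] z ∈ E
    · simp only []
      rw [Set.indicator_of_mem h]; simp
    · simp only []
      rw [Set.indicator_of_notMem h]; simp
  have hbd : |χ j - χ 0| ≤ 2 := by
    calc |χ j - χ 0| ≤ |χ j| + |χ 0| := abs_sub _ _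
      _ ≤ 2 := by linarith [hχbd j, hχbd 0]
  have hj0 : |(j:ℝ)⁻¹| = (j:ℝ)⁻¹ := abs_of_nonneg (by positivity)
  rw [hj0, mul_comm ((j:ℝ)⁻¹) _]
  exact mul_le_mul_of_nonneg_right hbd (by positivity)

lemma emp_Lr_shift (𝒰 : Ultrafilter ℕ) (h𝒰 : (𝒰 : Filter ℕ) ≤ atTop)
    (U : Set (ℕ → I)) (hU : IsOpen U) :
    Lr 𝒰 (emp z) (shft ⁻¹' U) = Lr 𝒰 (emp z) U := by
  have hν := emp_le_one z
  have h1 := tendsto_Lr 𝒰 (emp z) hν (shft ⁻¹' U)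
  have h2 := tendsto_Lr 𝒰 (emp z) hν U
  have h3 : Tendsto (fun j => (emp z j (shft ⁻¹' U)).toReal - (emp z j U).toReal)
      𝒰 (𝓝 0) := by
    apply squeeze_zero_norm (fun j => emp_shift_diff z hU.measurableSet j)
    have : Tendsto (fun j : ℕ => 2 * (j:ℝ)⁻¹) atTop (𝓝 (2 * 0)) :=
      tendsto_const_nhds.mul tendsto_inv_atTop_nhds_zero_nat
    rw [mul_zero] at this
    exact this.mono_left h𝒰
  have := h1.sub h2
  have h4 : Lr 𝒰 (emp z) (shft ⁻¹' U) - Lr 𝒰 (emp z) U = 0 :=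
    tendsto_nhds_unique this h3
  linarith

end Emp

section Aux4

variable {I : Type*} [MetricSpace I] [CompactSpace I] [Nonempty I]
  {d : ℕ} {A : I → Matrix (Fin d) (Fin d) ℂ}

lemma cont_log_max [MeasurableSpace I] [BorelSpace I] (hA : Continuous A) (n : ℕ) (j : ℕ) :
    Continuous fun x : ℕ → I => Real.log (max ‖coc A x n‖ (Real.exp (-(j:ℝ)))) :=
  Continuous.log (((coc_continuous A hA n).norm).max continuous_const)
    (fun x => ne_of_gt (lt_of_lt_of_le (Real.exp_pos _) (le_max_right _ _)))

end Aux4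

/-- Theorem 3 (v) of the paper: with respect to any metric `m2` generating
the product topology on `Σ_I`, the orbit of any weakly extremal point converges to the
Mather set in the sense of Birkhoff averages of the distance function. -/
theorem stmt5 {I : Type*} [MetricSpace I] [CompactSpace I] [Nonempty I]
    [MeasurableSpace I] [BorelSpace I] {d : ℕ}
    (A : I → Matrix (Fin d) (Fin d) ℂ) (hA : Continuous A) (hpos : 0 < jsr A)
    (m2 : MetricSpace (ℕ → I))
    (hm2 : m2.toPseudoMetricSpace.toUniformSpace.toTopologicalSpace
      = (inferInstance : TopologicalSpace (ℕ → I)))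
    (z : ℕ → I) (hz : WeakExt A z) :
    Tendsto (fun n : ℕ => (n : ℝ)⁻¹ * ∑ k ∈ Finset.range n,
        sInf {r : ℝ | ∃ y ∈ mather A,
          r = @Dist.dist _ m2.toPseudoMetricSpace.toDist (shft^[k] z) y})
      atTop (𝓝 0) := by
  classical
  set F : (ℕ → I) → ℝ := fun x => sInf {r : ℝ | ∃ y ∈ mather A,
      r = @Dist.dist _ m2.toPseudoMetricSpace.toDist x y} with hFdef
  show Tendsto (fun n : ℕ => (n : ℝ)⁻¹ * ∑ k ∈ Finset.range n, F (shft^[k] z)) atTop (𝓝 0)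
  have hFnonneg : ∀ x, 0 ≤ F x := by
    intro x
    apply Real.sInf_nonneg
    rintro r ⟨y, hy, rfl⟩
    exact @dist_nonneg _ m2.toPseudoMetricSpace x y
  -- trivial case: empty Mather set
  by_cases hZ : mather A = ∅
  · have hF0 : ∀ x, F x = 0 := by
      intro x
      have : {r : ℝ | ∃ y ∈ mather A, r = @Dist.dist _ m2.toPseudoMetricSpace.toDist x y}
          = (∅ : Set ℝ) := by
        ext r
        simp [hZ]
      rw [hFdef]
      simp only [this]
      exact Real.sInf_empty
    have : ∀ n : ℕ, (n : ℝ)⁻¹ * ∑ k ∈ Finset.range n, F (shft^[k] z) = 0 := by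
      intro n
      rw [Finset.sum_congr rfl fun k _ => hF0 (shft^[k] z), Finset.sum_const,
        smul_zero, mul_zero]
    exact tendsto_const_nhds.congr fun n => (this n).symm
  -- main case
  have hFeqInf : F = fun x => @Metric.infDist _ m2.toPseudoMetricSpace x (mather A) := by
    funext x
    rw [@Metric.infDist_eq_iInf _ m2.toPseudoMetricSpace, iInf, hFdef]
    apply congrArg sInf
    ext r
    constructor
    · rintro ⟨y, hy, rfl⟩
      exact ⟨⟨y, hy⟩, rfl⟩
    · rintro ⟨⟨y, hy⟩, rfl⟩
      exact ⟨y, hy, rfl⟩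
  have hFcont : Continuous F := by
    have h1 : @Continuous _ _ (m2.toPseudoMetricSpace.toUniformSpace.toTopologicalSpace) _
        (fun x => @Metric.infDist _ m2.toPseudoMetricSpace x (mather A)) :=
      @Metric.continuous_infDist_pt _ m2.toPseudoMetricSpace (mather A)
    rw [hm2] at h1
    rw [hFeqInf]
    exact h1
  have hFmather : ∀ x ∈ mather A, F x = 0 := by
    intro x hx
    refine le_antisymm ?_ (hFnonneg x)
    refine csInf_le ⟨0, ?_⟩ ⟨x, hx, (@dist_self _ m2.toPseudoMetricSpace x).symm⟩
    rintro r ⟨y, hy, rfl⟩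
    exact @dist_nonneg _ m2.toPseudoMetricSpace x y
  set S : ℕ → ℝ := fun n => (n : ℝ)⁻¹ * ∑ k ∈ Finset.range n, F (shft^[k] z) with hSdef
  have hSnn : ∀ n, 0 ≤ S n := by
    intro n
    apply mul_nonneg (by positivity)
    exact Finset.sum_nonneg fun k _ => hFnonneg _
  by_contra hcon
  rw [Metric.tendsto_atTop] at hcon
  push_neg at hcon
  obtain ⟨ε, hε, hfreq⟩ := hcon
  have hfreq' : ∀ N, ∃ n ≥ N, ε ≤ S n := by
    intro N
    obtain ⟨n, hnN, hn⟩ := hfreq N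
    refine ⟨n, hnN, ?_⟩
    rwa [Real.dist_eq, sub_zero, abs_of_nonneg (hSnn n)] at hn
  have hNB : (atTop ⊓ 𝓟 {n : ℕ | ε ≤ S n}).NeBot := by
    rw [← frequently_iff_neBot]
    exact frequently_atTop.mpr hfreq'
  set 𝒰 : Ultrafilter ℕ := @Ultrafilter.of ℕ (atTop ⊓ 𝓟 {n : ℕ | ε ≤ S n}) hNB with h𝒰def
  have h𝒰F : (𝒰 : Filter ℕ) ≤ atTop ⊓ 𝓟 {n : ℕ | ε ≤ S n} := Ultrafilter.of_le _
  have h𝒰top : (𝒰 : Filter ℕ) ≤ atTop := h𝒰F.trans inf_le_left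
  have h𝒰S : ∀ᶠ n in (𝒰 : Filter ℕ), ε ≤ S n := by
    have hmem : {n : ℕ | ε ≤ S n} ∈ atTop ⊓ 𝓟 {n : ℕ | ε ≤ S n} :=
      mem_inf_of_right (mem_principal_self _)
    exact h𝒰F hmem
  have hν : ∀ j, emp z j Set.univ ≤ 1 := emp_le_one z
  have hprob : ∀ᶠ j in (𝒰 : Filter ℕ), emp z j Set.univ = 1 := by
    have h1 : ∀ᶠ j in (𝒰 : Filter ℕ), 1 ≤ j := h𝒰top (eventually_ge_atTop 1)
    filter_upwards [h1] with j hj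
    exact emp_univ z hj
  set μ : Measure (ℕ → I) := ulimMeasure 𝒰 (emp z) hν with hμdef
  haveI hμprob : IsProbabilityMeasure μ := ulimMeasure_prob 𝒰 (emp z) hν hprob
  -- shift invariance
  have hmap : Measure.map shft μ = μ :=
    ulimMeasure_map 𝒰 (emp z) hν continuous_shft (fun U hU => emp_Lr_shift z 𝒰 h𝒰top U hU)
  have hMinv : μ ∈ Minv I := ⟨hμprob, ⟨measurable_shft, hmap⟩⟩
  -- lower bounds for truncated integrals
  have hlow : ∀ (n : ℕ+) (j : ℕ), (((n : ℕ) : ℝ)) * Real.log (jsr A)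
      ≤ ∫ x, Real.log (max ‖coc A x (n : ℕ)‖ (Real.exp (-(j:ℝ)))) ∂μ := by
    intro n j
    set h : (ℕ → I) → ℝ :=
      fun x => Real.log (max ‖coc A x (n : ℕ)‖ (Real.exp (-(j:ℝ)))) with hhdef
    have hhcont : Continuous h := cont_log_max hA (n : ℕ) j
    obtain ⟨Ch, hChpos, hCh⟩ := cont_bound hhcont
    have hbdd : ∀ j', (∫ x, h x ∂(emp z j')) ∈ Set.Icc (-Ch) Ch := by
      intro j'
      haveI := emp_finite z j'
      have h1 := norm_integral_le_of_norm_le_const (μ := emp z j') (f := h) (C := Ch)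
        (Filter.Eventually.of_forall fun x => by rw [Real.norm_eq_abs]; exact hCh x)
      have h2 : ((emp z j') Set.univ).toReal ≤ 1 := by
        refine ENNReal.toReal_le_of_le_ofReal zero_le_one ?_
        rw [ENNReal.ofReal_one]
        exact emp_le_one z j'
      have h3 : ‖∫ x, h x ∂(emp z j')‖ ≤ Ch := by
        refine h1.trans ?_
        calc Ch * ((emp z j') Set.univ).toReal ≤ Ch * 1 :=
              mul_le_mul_of_nonneg_left h2 hChpos.le
          _ = Ch := mul_one Ch
      rw [Real.norm_eq_abs] at h3
      exact abs_le.mp h3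
    have hltend : Tendsto (fun j' => ∫ x, h x ∂(emp z j')) 𝒰
        (𝓝 (limUnder 𝒰 (fun j' => ∫ x, h x ∂(emp z j')))) :=
      ulim_tendsto 𝒰 hbdd
    have hint_eq : ∫ x, h x ∂μ = limUnder 𝒰 (fun j' => ∫ x, h x ∂(emp z j')) :=
      integral_ulimMeasure 𝒰 (emp z) hν hprob hhcont hltend
    have hvt := (tendsto_avg_block hpos hz (n : ℕ)).mono_left h𝒰top
    have hcomp : ∀ᶠ j' in (𝒰 : Filter ℕ),
        (fun M : ℕ => (M : ℝ)⁻¹ *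
          ((∑ i ∈ Finset.range (n : ℕ), Real.log ‖coc A z (M + i)‖)
            - ∑ i ∈ Finset.range (n : ℕ), Real.log ‖coc A z i‖)) j'
          ≤ ∫ x, h x ∂(emp z j') := by
      refine Filter.Eventually.of_forall fun M => ?_
      rw [emp_integral z hhcont M]
      have hge : ∀ k, Real.log ‖coc A (shft^[k] z) (n : ℕ)‖ ≤ h (shft^[k] z) := fun k =>
        Real.log_le_log (coc_orbit_norm_pos hpos hz k (n : ℕ)) (le_max_left _ _)
      have h1 := sum_log_coc_orbit_ge hpos hz (n : ℕ) M
      have h2 : (∑ k ∈ Finset.range M, Real.log ‖coc A (shft^[k] z) (n : ℕ)‖)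
          ≤ ∑ k ∈ Finset.range M, h (shft^[k] z) :=
        Finset.sum_le_sum fun k _ => hge k
      exact mul_le_mul_of_nonneg_left (h1.trans h2) (by positivity)
    have := le_of_tendsto_of_tendsto hvt hltend hcomp
    rwa [hint_eq]
  -- the eInt values
  have hr : ∀ n : ℕ+, ∃ r : ℝ, eInt μ (fun x => elog ‖coc A x (n : ℕ)‖) = (r : EReal)
      ∧ (((n : ℕ) : ℝ)) * Real.log (jsr A) ≤ r := by
    intro n
    exact eInt_elog_eq μ (fun x => ‖coc A x (n : ℕ)‖)
      ((coc_continuous A hA (n : ℕ)).norm.measurable) (fun x => norm_nonneg _)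
      (fun x => norm_coc_le_Gsup hA x (n : ℕ))
      (fun j => cont_integrable (cont_log_max hA (n : ℕ) j) μ)
      (fun j => hlow n j)
  choose r hr1 hr2 using hr
  have hup : ∀ n : ℕ+, r n ≤ Real.log (Gsup A (n : ℕ)) := by
    intro n
    have hpt : ∀ x : ℕ → I, elog ‖coc A x (n : ℕ)‖ ≤ ((Real.log (Gsup A (n : ℕ)) : ℝ) : EReal) := by
      intro x
      by_cases hx : ‖coc A x (n : ℕ)‖ ≤ 0
      · rw [elog, if_pos hx]
        exact bot_le
      · rw [elog, if_neg hx]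
        exact EReal.coe_le_coe_iff.mpr
          (Real.log_le_log (not_le.mp hx) (norm_coc_le_Gsup hA x (n : ℕ)))
    have := eInt_le_const μ (fun x => elog ‖coc A x (n : ℕ)‖) (Real.log (Gsup A (n : ℕ))) hpt
    rw [hr1 n] at this
    exact EReal.coe_le_coe_iff.mp this
  have havg : ∀ n : ℕ+, avg (fun M => ‖M‖) A μ (n : ℕ)
      = (((((n : ℕ) : ℝ))⁻¹ * r n : ℝ) : EReal) := by
    intro n
    show cE (n : ℕ) * eInt μ (fun x => elog ‖coc A x (n : ℕ)‖) = _
    rw [hr1 n, cE, ← EReal.coe_mul]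
  have helog : elog (jsr A) = ((Real.log (jsr A) : ℝ) : EReal) := by
    rw [elog, if_neg (not_le.mpr hpos)]
  have hinf : (⨅ n : ℕ+, avg (fun M => ‖M‖) A μ (n : ℕ)) = elog (jsr A) := by
    apply le_antisymm
    · by_contra hlt'
      push_neg at hlt'
      rw [helog] at hlt'
      obtain ⟨b, hb1, hb2⟩ := EReal.exists_between_coe_real hlt'
      have hjb : jsr A < Real.exp b := by
        have hlb : Real.log (jsr A) < b := EReal.coe_lt_coe_iff.mp hb1
        calc jsr A = Real.exp (Real.log (jsr A)) := (Real.exp_log hpos).symm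
          _ < Real.exp b := Real.exp_lt_exp.mpr hlb
      have hjsr_inf : (⨅ n : ℕ+, (Gsup A (n : ℕ)) ^ (((n : ℕ) : ℝ)⁻¹)) < Real.exp b := hjb
      obtain ⟨n, hn⟩ := exists_lt_of_ciInf_lt hjsr_inf
      have hGpos := Gsup_pos hA hpos n
      have htnpos : (0:ℝ) < (Gsup A (n : ℕ)) ^ (((n : ℕ) : ℝ)⁻¹) :=
        Real.rpow_pos_of_pos hGpos _
      have hlogt : (((n : ℕ) : ℝ))⁻¹ * r n
          ≤ Real.log ((Gsup A (n : ℕ)) ^ (((n : ℕ) : ℝ)⁻¹)) := by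
        rw [Real.log_rpow hGpos]
        exact mul_le_mul_of_nonneg_left (hup n) (by positivity)
      have hlt2 : Real.log ((Gsup A (n : ℕ)) ^ (((n : ℕ) : ℝ)⁻¹)) < b := by
        calc Real.log ((Gsup A (n : ℕ)) ^ (((n : ℕ) : ℝ)⁻¹))
            < Real.log (Real.exp b) := Real.log_lt_log htnpos hn
          _ = b := Real.log_exp b
      have hchain : (⨅ n' : ℕ+, avg (fun M => ‖M‖) A μ ((n' : ℕ)))
          ≤ avg (fun M => ‖M‖) A μ (n : ℕ) := iInf_le _ n
      rw [havg n] at hchain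
      have : (⨅ n' : ℕ+, avg (fun M => ‖M‖) A μ ((n' : ℕ))) < (b : EReal) :=
        lt_of_le_of_lt hchain (EReal.coe_lt_coe_iff.mpr (lt_of_le_of_lt hlogt hlt2))
      exact absurd (this.trans hb2) (lt_irrefl _)
    · rw [helog]
      refine le_iInf fun n => ?_
      rw [havg n]
      apply EReal.coe_le_coe_iff.mpr
      have hnpos : (0:ℝ) < ((n : ℕ) : ℝ) := by exact_mod_cast n.pos
      calc Real.log (jsr A)
          = (((n : ℕ) : ℝ))⁻¹ * ((((n : ℕ) : ℝ)) * Real.log (jsr A)) := by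
            field_simp
        _ ≤ (((n : ℕ) : ℝ))⁻¹ * r n :=
            mul_le_mul_of_nonneg_left (hr2 n) (by positivity)
  have hMmax : μ ∈ Mmax A := ⟨hMinv, hinf⟩
  -- ∫ F dμ = limit of S ≥ ε
  have hFbdd : ∃ CF : ℝ, 0 < CF ∧ ∀ x, |F x| ≤ CF := cont_bound hFcont
  obtain ⟨CF, hCFpos, hCF⟩ := hFbdd
  have hSbdd : ∀ j', (∫ x, F x ∂(emp z j')) ∈ Set.Icc (-CF) CF := by
    intro j'
    haveI := emp_finite z j'
    have h1 := norm_integral_le_of_norm_le_const (μ := emp z j') (f := F) (C := CF)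
      (Filter.Eventually.of_forall fun x => by rw [Real.norm_eq_abs]; exact hCF x)
    have h2 : ((emp z j') Set.univ).toReal ≤ 1 := by
      refine ENNReal.toReal_le_of_le_ofReal zero_le_one ?_
      rw [ENNReal.ofReal_one]
      exact emp_le_one z j'
    have h3 : ‖∫ x, F x ∂(emp z j')‖ ≤ CF := by
      refine h1.trans ?_
      calc CF * ((emp z j') Set.univ).toReal ≤ CF * 1 :=
            mul_le_mul_of_nonneg_left h2 hCFpos.le
        _ = CF := mul_one CF
    rw [Real.norm_eq_abs] at h3
    exact abs_le.mp h3
  have hFl : Tendsto (fun j' => ∫ x, F x ∂(emp z j')) 𝒰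
      (𝓝 (limUnder 𝒰 (fun j' => ∫ x, F x ∂(emp z j')))) :=
    ulim_tendsto 𝒰 hSbdd
  have hSl : Tendsto S 𝒰 (𝓝 (limUnder 𝒰 (fun j' => ∫ x, F x ∂(emp z j')))) := by
    apply hFl.congr
    intro j'
    rw [emp_integral z hFcont j']
  have hεl : ε ≤ limUnder 𝒰 (fun j' => ∫ x, F x ∂(emp z j')) :=
    le_of_tendsto_of_tendsto tendsto_const_nhds hSl h𝒰S
  have hintF : ∫ x, F x ∂μ = limUnder 𝒰 (fun j' => ∫ x, F x ∂(emp z j')) :=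
    integral_ulimMeasure 𝒰 (emp z) hν hprob hFcont hFl
  -- but the integral vanishes on the support
  have hintF0 : ∫ x, F x ∂μ = 0 := by
    have hsub : {x | F x ≠ 0} ⊆ (msupport μ)ᶜ := by
      intro x hx
      intro hxs
      exact hx (hFmather x (Set.mem_biUnion hMmax hxs))
    have hnull : μ {x | F x ≠ 0} = 0 :=
      measure_mono_null hsub (msupport_compl_null μ)
    have hae : F =ᵐ[μ] (fun _ => (0:ℝ)) := by
      rw [Filter.EventuallyEq, MeasureTheory.ae_iff]
      exact hnull
    rw [MeasureTheory.integral_congr_ae hae, MeasureTheory.integral_zero]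
  rw [hintF0] at hintF
  linarith

end
end

section
/- Let T : X → X be a continuous transformation of a compact metric space and let (f_n) be a subadditive sequence of upper semi-continuous functions from X to ℝ ∪ {−∞}. Define β̃[(f_n)] := lim_{n→∞} sup_{x ∈ X} (1/n) f_n(x) (the limit exists in ℝ ∪ {−∞} by subadditivity). Then there exists z ∈ X such that inf_{m≥1} (1/m) f_m(z) ≥ β̃[(f_n)]; moreover the point z may be taken to be recurrent with respect to T. -/
open MeasureTheory Filter Topology
open scoped ENNReal NNReal
open scoped Matrix.Norms.L2Operator

noncomputable section

namespace Stmt19Aux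

open Filter Topology Set


lemma lt_coe_sub {a : EReal} {r : ℝ} (h : a < (r : EReal)) :
    ∃ δ : ℝ, 0 < δ ∧ a < ((r - δ : ℝ) : EReal) := by
  induction a using EReal.rec with
  | bot => exact ⟨1, one_pos, EReal.bot_lt_coe _⟩
  | coe x =>
    have hx : x < r := EReal.coe_lt_coe_iff.1 h
    exact ⟨(r - x) / 2, by linarith, EReal.coe_lt_coe_iff.2 (by linarith)⟩
  | top => exact absurd h (by simp)

variable {X : Type*} [TopologicalSpace X]

lemma usc_exists_max [CompactSpace X] [Nonempty X] {f : X → EReal}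
    (hf : UpperSemicontinuous f) : ∃ x : X, ∀ y, f y ≤ f x := by
  by_contra h
  push_neg at h
  have hcov : (Set.univ : Set X) ⊆ ⋃ y : X, f ⁻¹' Set.Iio (f y) := by
    intro x _
    obtain ⟨y, hy⟩ := h x
    exact Set.mem_iUnion.2 ⟨y, hy⟩
  obtain ⟨s, hs⟩ := isCompact_univ.elim_finite_subcover (fun y : X => f ⁻¹' Set.Iio (f y))
    (fun y => hf.isOpen_preimage (f y)) hcov
  have hsne : s.Nonempty := by
    obtain ⟨x⟩ := ‹Nonempty X›
    obtain ⟨i, hi, -⟩ := Set.mem_iUnion₂.1 (hs (Set.mem_univ x))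
    exact ⟨i, hi⟩
  obtain ⟨y0, hy0, hmax⟩ := s.exists_max_image f hsne
  obtain ⟨i, hi, hlt⟩ := Set.mem_iUnion₂.1 (hs (Set.mem_univ y0))
  exact absurd (lt_of_lt_of_le hlt (hmax i hi)) (lt_irrefl _)

/-- The ω-limit set of a sequence. -/
def omegaSet (u : ℕ → X) : Set X := ⋂ N : ℕ, closure (u '' Set.Ici N)

lemma mem_omegaSet_iff {u : ℕ → X} {y : X} :
    y ∈ omegaSet u ↔ MapClusterPt y atTop u := by
  rw [mapClusterPt_iff_frequently]
  constructor
  · intro hy t ht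
    rw [frequently_atTop]
    intro N
    have h1 : y ∈ closure (u '' Set.Ici N) := Set.mem_iInter.1 hy N
    rcases mem_closure_iff_nhds.1 h1 t ht with ⟨w, hw1, hw2⟩
    obtain ⟨n, hn, rfl⟩ := hw2
    exact ⟨n, hn, hw1⟩
  · intro hy
    rw [omegaSet, Set.mem_iInter]
    intro N
    rw [mem_closure_iff_nhds]
    intro t ht
    obtain ⟨n, hn, h⟩ := (frequently_atTop.1 (hy t ht)) N
    exact ⟨u n, h, Set.mem_image_of_mem _ hn⟩

lemma omegaSet_isClosed (u : ℕ → X) : IsClosed (omegaSet u) :=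
  isClosed_iInter fun _ => isClosed_closure

lemma omegaSet_nonempty [CompactSpace X] (u : ℕ → X) : (omegaSet u).Nonempty := by
  obtain ⟨y, hy⟩ := exists_clusterPt_of_compactSpace (map u atTop)
  exact ⟨y, mem_omegaSet_iff.2 hy⟩

lemma omegaSet_subset {u : ℕ → X} {K : Set X} (hK : IsClosed K) (hu : ∀ n, u n ∈ K) :
    omegaSet u ⊆ K := by
  refine (Set.iInter_subset _ 0).trans ?_
  rw [← hK.closure_eq]
  exact closure_mono (by rintro _ ⟨n, -, rfl⟩; exact hu n)

lemma omegaSet_mapsTo {T : X → X} (hT : Continuous T) (z : X) :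
    Set.MapsTo T (omegaSet fun n => T^[n + 1] z) (omegaSet fun n => T^[n + 1] z) := by
  intro y hy
  rw [omegaSet, Set.mem_iInter] at hy ⊢
  intro N
  have h1 : T y ∈ closure (T '' ((fun n => T^[n + 1] z) '' Set.Ici N)) :=
    image_closure_subset_closure_image hT (Set.mem_image_of_mem T (hy N))
  refine closure_mono ?_ h1
  rintro _ ⟨_, ⟨n, hn, rfl⟩, rfl⟩
  have hn' : N ≤ n := hn
  refine ⟨n + 1, Set.mem_Ici.2 (by omega), ?_⟩
  show T^[n + 1 + 1] z = T (T^[n + 1] z)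
  exact Function.iterate_succ_apply' T (n + 1) z

lemma eventually_mem_of_omegaSet_subset [CompactSpace X] {u : ℕ → X} {V : Set X}
    (hV : IsOpen V) (h : omegaSet u ⊆ V) : ∀ᶠ n in atTop, u n ∈ V := by
  by_contra hc
  have hfreq : ∃ᶠ n in atTop, u n ∈ Vᶜ := by
    rw [Filter.not_eventually] at hc
    exact hc.mono fun n hn => hn
  have hne : (atTop ⊓ 𝓟 {n | u n ∈ Vᶜ}).NeBot := Filter.frequently_iff_neBot.1 hfreq
  obtain ⟨y, hy⟩ := exists_clusterPt_of_compactSpace (map u (atTop ⊓ 𝓟 {n | u n ∈ Vᶜ}))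
  have hyV : y ∈ Vᶜ := by
    have hle : map u (atTop ⊓ 𝓟 {n | u n ∈ Vᶜ}) ≤ 𝓟 Vᶜ := by
      refine le_trans (map_mono inf_le_right) ?_
      rw [map_principal]
      exact principal_mono.2 (by rintro _ ⟨n, hn, rfl⟩; exact hn)
    have : ClusterPt y (𝓟 Vᶜ) := hy.mono hle
    exact hV.isClosed_compl.closure_eq ▸ mem_closure_iff_clusterPt.2 this
  have hyo : y ∈ omegaSet u :=
    mem_omegaSet_iff.2 (hy.mono (map_mono inf_le_left))
  exact hyV (h hyo)

lemma usc_uniform_bound {f : X → EReal} (hf : UpperSemicontinuous f) {K : Set X}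
    (hK : IsCompact K) {r : ℝ} (h : ∀ y ∈ K, f y < (r : EReal)) :
    ∃ δ : ℝ, 0 < δ ∧ ∃ V : Set X, IsOpen V ∧ K ⊆ V ∧
      ∀ y ∈ V, f y < ((r - δ : ℝ) : EReal) := by
  rcases K.eq_empty_or_nonempty with rfl | hKne
  · exact ⟨1, one_pos, ∅, isOpen_empty, Set.Subset.rfl, by simp⟩
  have key : ∀ z : K, ∃ δ : ℝ, 0 < δ ∧ f (z : X) < ((r - δ : ℝ) : EReal) := fun z =>
    lt_coe_sub (h z z.2)
  choose δ hδ hlt using key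
  have hUopen : ∀ z : K, IsOpen (f ⁻¹' Set.Iio ((r - δ z : ℝ) : EReal)) := fun z =>
    hf.isOpen_preimage _
  have hcover : K ⊆ ⋃ z : K, f ⁻¹' Set.Iio ((r - δ z : ℝ) : EReal) := fun y hy =>
    Set.mem_iUnion.2 ⟨⟨y, hy⟩, hlt ⟨y, hy⟩⟩
  obtain ⟨s, hs⟩ := hK.elim_finite_subcover _ hUopen hcover
  have hsne : s.Nonempty := by
    obtain ⟨x, hx⟩ := hKne
    obtain ⟨i, hi, -⟩ := Set.mem_iUnion₂.1 (hs hx)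
    exact ⟨i, hi⟩
  refine ⟨s.inf' hsne δ, (Finset.lt_inf'_iff hsne).2 fun i _ => hδ i,
    ⋃ i ∈ s, f ⁻¹' Set.Iio ((r - δ i : ℝ) : EReal),
    isOpen_biUnion fun i _ => hUopen i, hs, ?_⟩
  intro y hy
  obtain ⟨i, hi, hyi⟩ := Set.mem_iUnion₂.1 hy
  refine lt_of_lt_of_le hyi (EReal.coe_le_coe_iff.2 ?_)
  have := Finset.inf'_le δ hi
  linarith


lemma covering_lemma {T : X → X} {f : ℕ → X → EReal}
    (husc : ∀ n, 1 ≤ n → UpperSemicontinuous (f n))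
    (hsub : ∀ n m, 1 ≤ n → 1 ≤ m → ∀ y, f (n + m) y ≤ f n (T^[m] y) + f m y)
    (hbound : ∀ r, 1 ≤ r → ∃ C : ℝ, ∀ x, f r x ≤ (C : EReal))
    {K : Set X} (hKc : IsCompact K) (hKne : K.Nonempty) (hKinv : Set.MapsTo T K K)
    {b : ℝ} (hK : ∀ n : ℕ, 1 ≤ n → ∃ x ∈ K, (((n : ℝ) * b : ℝ) : EReal) ≤ f n x) :
    ∃ z ∈ K, ∀ m : ℕ, 1 ≤ m → (((m : ℝ) * b : ℝ) : EReal) ≤ f m z := by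
  classical
  by_contra hcon
  push_neg at hcon
  have key : ∀ z : K, ∃ m : ℕ, ∃ δ : ℝ, 1 ≤ m ∧ 0 < δ ∧
      f m (z : X) < ((((m : ℝ)) * b - δ : ℝ) : EReal) := by
    intro z
    obtain ⟨m, hm1, hm2⟩ := hcon z z.2
    obtain ⟨δ, hδ, h⟩ := lt_coe_sub hm2
    exact ⟨m, δ, hm1, hδ, h⟩
  choose m δ hm hδ hlt using key
  have hUopen : ∀ z : K, IsOpen (f (m z) ⁻¹' Set.Iio ((((m z : ℝ)) * b - δ z : ℝ) : EReal)) :=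
    fun z => (husc _ (hm z)).isOpen_preimage _
  have hcover : K ⊆ ⋃ z : K, f (m z) ⁻¹' Set.Iio ((((m z : ℝ)) * b - δ z : ℝ) : EReal) :=
    fun y hy => Set.mem_iUnion.2 ⟨⟨y, hy⟩, hlt ⟨y, hy⟩⟩
  obtain ⟨s, hs⟩ := hKc.elim_finite_subcover _ hUopen hcover
  have hsne : s.Nonempty := by
    obtain ⟨x, hx⟩ := hKne
    obtain ⟨i, hi, -⟩ := Set.mem_iUnion₂.1 (hs hx)
    exact ⟨i, hi⟩
  set M : ℕ := s.sup m with hMdef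
  have hM1 : 1 ≤ M := by
    obtain ⟨i, hi⟩ := hsne
    exact le_trans (hm i) (Finset.le_sup hi)
  set δ0 : ℝ := s.inf' hsne δ with hδ0def
  have hδ0 : 0 < δ0 := (Finset.lt_inf'_iff hsne).2 fun i _ => hδ i
  have hpt : ∀ y ∈ K, ∃ mm, 1 ≤ mm ∧ mm ≤ M ∧
      f mm y < (((mm : ℝ) * b - δ0 : ℝ) : EReal) := by
    intro y hy
    obtain ⟨i, hi, hyU⟩ := Set.mem_iUnion₂.1 (hs hy)
    refine ⟨m i, hm i, Finset.le_sup hi, lt_of_lt_of_le hyU (EReal.coe_le_coe_iff.2 ?_)⟩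
    have := Finset.inf'_le δ hi
    linarith
  -- uniform upper bound B
  have hbound' : ∀ r : ℕ, ∃ C : ℝ, 1 ≤ r → ∀ x, f r x ≤ (C : EReal) := by
    intro r
    rcases Nat.eq_zero_or_pos r with hr | hr
    · exact ⟨0, by omega⟩
    · obtain ⟨C, hC⟩ := hbound r hr
      exact ⟨C, fun _ => hC⟩
  choose C hC using hbound'
  obtain ⟨B, hB⟩ : ∃ B : ℝ, ∀ r, 1 ≤ r → r ≤ M → ∀ x, f r x ≤ (((r : ℝ) * b + B : ℝ) : EReal) := by
    refine ⟨(Finset.Icc 1 M).sup' ⟨1, by simp [hM1]⟩ (fun r => C r - (r : ℝ) * b), ?_⟩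
    intro r hr1 hr2 x
    refine le_trans (hC r hr1 x) (EReal.coe_le_coe_iff.2 ?_)
    have : C r - (r : ℝ) * b ≤ (Finset.Icc 1 M).sup' ⟨1, by simp [hM1]⟩
        (fun r => C r - (r : ℝ) * b) :=
      Finset.le_sup' (f := fun r => C r - (r : ℝ) * b) (Finset.mem_Icc.2 ⟨hr1, hr2⟩)
    linarith
  -- main induction
  have main : ∀ n, 1 ≤ n → ∀ y ∈ K,
      f n y ≤ (((n : ℝ) * b + B - δ0 * (((n - 1) / M : ℕ) : ℝ) : ℝ) : EReal) := by
    intro n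
    induction n using Nat.strong_induction_on with
    | _ n ih =>
      intro hn y hy
      by_cases hcase : n ≤ M
      · have h0 : (n - 1) / M = 0 := Nat.div_eq_of_lt (by omega)
        rw [h0]
        refine le_trans (hB n hn hcase y) (EReal.coe_le_coe_iff.2 (by simp))
      · obtain ⟨mm, h1, h2, h3⟩ := hpt y hy
        have hnm : 1 ≤ n - mm := by omega
        have heq : (n - mm) + mm = n := by omega
        have hstep := hsub (n - mm) mm hnm h1 y
        rw [heq] at hstep
        have hA := ih (n - mm) (by omega) hnm (T^[mm] y) (hKinv.iterate mm hy)
        have hsum := le_trans hstep (add_le_add hA (le_of_lt h3))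
        refine le_trans hsum ?_
        rw [← EReal.coe_add]
        apply EReal.coe_le_coe_iff.2
        have hdiv : (n - 1) / M ≤ (n - mm - 1) / M + 1 := by
          have h5 : n - 1 ≤ (n - mm - 1) + M := by omega
          calc (n - 1) / M ≤ ((n - mm - 1) + M) / M := Nat.div_le_div_right h5
          _ = (n - mm - 1) / M + 1 := Nat.add_div_right _ (by omega)
        have hcast : ((n - mm : ℕ) : ℝ) = (n : ℝ) - (mm : ℝ) := by
          push_cast [Nat.cast_sub (by omega : mm ≤ n)]
          ring
        have hdiv' : (((n - 1) / M : ℕ) : ℝ) ≤ (((n - mm - 1) / M : ℕ) : ℝ) + 1 := by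
          exact_mod_cast hdiv
        have hmul : δ0 * (((n - 1) / M : ℕ) : ℝ) ≤ δ0 * ((((n - mm - 1) / M : ℕ) : ℝ) + 1) :=
          mul_le_mul_of_nonneg_left hdiv' (le_of_lt hδ0)
        rw [hcast]
        nlinarith [hmul]
  -- contradiction
  obtain ⟨k, hk⟩ := exists_nat_gt (B / δ0)
  set n := M * k + 1 with hndef
  obtain ⟨x, hxK, hxlb⟩ := hK n (Nat.succ_le_succ (Nat.zero_le _))
  have hub := main n (Nat.succ_le_succ (Nat.zero_le _)) x hxK
  have hreal : (n : ℝ) * b ≤ (n : ℝ) * b + B - δ0 * (((n - 1) / M : ℕ) : ℝ) :=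
    EReal.coe_le_coe_iff.1 (le_trans hxlb hub)
  have hq : (n - 1) / M = k := by
    simp only [hndef, Nat.add_sub_cancel]
    exact Nat.mul_div_cancel_left k (by omega)
  rw [hq] at hreal
  have h6 : δ0 * (k : ℝ) ≤ B := by linarith
  have h7 : (k : ℝ) ≤ B / δ0 := by
    rw [le_div_iff₀ hδ0]
    linarith [h6]
  linarith

lemma main_machine [CompactSpace X] [Nonempty X] {T : X → X} (hT : Continuous T)
    {f : ℕ → X → EReal}
    (husc : ∀ n, 1 ≤ n → UpperSemicontinuous (f n))
    (hsub : ∀ n m, 1 ≤ n → 1 ≤ m → ∀ y, f (n + m) y ≤ f n (T^[m] y) + f m y)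
    (hbound : ∀ r, 1 ≤ r → ∃ C : ℝ, ∀ x, f r x ≤ (C : EReal))
    {b : ℝ} (hS : ∀ n : ℕ, 1 ≤ n → ∃ x, (((n : ℝ) * b : ℝ) : EReal) ≤ f n x) :
    ∃ z : X, MapClusterPt z atTop (fun n => T^[n + 1] z) ∧
      ∀ m : ℕ, 1 ≤ m → (((m : ℝ) * b : ℝ) : EReal) ≤ f m z := by
  classical
  set G : ℕ → Set X := fun n => f n ⁻¹' Set.Ici (((n : ℝ) * b : ℝ) : EReal) with hGdef
  have hGclosed : ∀ n, 1 ≤ n → IsClosed (G n) := fun n hn => (husc n hn).isClosed_preimage _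
  set A : Set (Set X) := {K | K.Nonempty ∧ IsClosed K ∧ Set.MapsTo T K K ∧
    ∀ n : ℕ, 1 ≤ n → ∃ x ∈ K, x ∈ G n} with hAdef
  have hXA : Set.univ ∈ A := by
    refine ⟨Set.univ_nonempty, isClosed_univ, Set.mapsTo_univ _ _, fun n hn => ?_⟩
    obtain ⟨x, hx⟩ := hS n hn
    exact ⟨x, Set.mem_univ x, hx⟩
  have hchain : ∀ c ⊆ A, IsChain (· ⊆ ·) c → c.Nonempty → ∃ lb ∈ A, ∀ s ∈ c, lb ⊆ s := by
    intro c hcA hch hcne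
    have hdir : ∀ n : ℕ, 1 ≤ n → Directed (· ⊇ ·) (fun K : c => (K : Set X) ∩ G n) := by
      intro n hn K1 K2
      rcases hch.total K1.2 K2.2 with h | h
      · exact ⟨K1, Set.Subset.rfl, Set.inter_subset_inter_left _ h⟩
      · exact ⟨K2, Set.inter_subset_inter_left _ h, Set.Subset.rfl⟩
    have hccl : ∀ K : c, IsClosed (K : Set X) := fun K => (hcA K.2).2.1
    have hint : ∀ n : ℕ, 1 ≤ n → (⋂₀ c ∩ G n).Nonempty := by
      intro n hn
      haveI : Nonempty c := hcne.to_subtype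
      have h := IsCompact.nonempty_iInter_of_directed_nonempty_isCompact_isClosed
        (fun K : c => (K : Set X) ∩ G n) (hdir n hn)
        (fun K => by
          obtain ⟨x, hx1, hx2⟩ := (hcA K.2).2.2.2 n hn
          exact ⟨x, hx1, hx2⟩)
        (fun K => (((hccl K).inter (hGclosed n hn))).isCompact)
        (fun K => (hccl K).inter (hGclosed n hn))
      obtain ⟨x, hx⟩ := h
      rw [Set.mem_iInter] at hx
      refine ⟨x, ?_, ((hx ⟨_, hcne.some_mem⟩).2)⟩
      rw [Set.mem_sInter]
      intro K hK
      exact (hx ⟨K, hK⟩).1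
    refine ⟨⋂₀ c, ⟨?_, ?_, ?_, ?_⟩, fun s hs => Set.sInter_subset_of_mem hs⟩
    · obtain ⟨x, hx, -⟩ := hint 1 le_rfl
      exact ⟨x, hx⟩
    · exact isClosed_sInter fun K hK => (hcA hK).2.1
    · intro x hx
      rw [Set.mem_sInter] at hx ⊢
      intro K hK
      exact (hcA hK).2.2.1 (hx K hK)
    · intro n hn
      obtain ⟨x, hx1, hx2⟩ := hint n hn
      exact ⟨x, hx1, hx2⟩
  obtain ⟨K, -, hKA, hKmin⟩ := zorn_superset_nonempty A hchain Set.univ hXA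
  obtain ⟨hKne, hKcl, hKinv, hKcond⟩ := hKA
  have hKc : IsCompact K := hKcl.isCompact
  obtain ⟨z, hzK, hz⟩ := covering_lemma husc hsub hbound hKc hKne hKinv
    (fun n hn => by
      obtain ⟨x, hx1, hx2⟩ := hKcond n hn
      exact ⟨x, hx1, hx2⟩)
  set u : ℕ → X := fun n => T^[n + 1] z with hudef
  have huK : ∀ n, u n ∈ K := fun n => (hKinv.iterate (n + 1)) hzK
  set Ω : Set X := omegaSet u with hΩdef
  have hΩK : Ω ⊆ K := omegaSet_subset hKcl huK
  have hΩA : Ω ∈ A := by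
    refine ⟨omegaSet_nonempty u, omegaSet_isClosed u, omegaSet_mapsTo hT z, ?_⟩
    by_contra hnc
    push_neg at hnc
    obtain ⟨n₀, hn₀, hall⟩ := hnc
    have hlt : ∀ y ∈ Ω, f n₀ y < (((n₀ : ℝ) * b : ℝ) : EReal) := by
      intro y hy
      have := hall y hy
      simp only [hGdef, Set.mem_preimage, Set.mem_Ici, not_le] at this
      exact this
    obtain ⟨δ, hδ, V, hVopen, hΩV, hV⟩ := usc_uniform_bound (husc n₀ hn₀)
      ((omegaSet_isClosed u).isCompact) hlt
    have hev := eventually_mem_of_omegaSet_subset hVopen hΩV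
    obtain ⟨N₀, hN₀⟩ := eventually_atTop.1 hev
    set N : ℕ := N₀ + 1 with hNdef
    have hNV : ∀ j, N ≤ j → T^[j] z ∈ V := by
      intro j hj
      have : T^[(j - 1) + 1] z ∈ V := hN₀ (j - 1) (by omega)
      rwa [show (j - 1) + 1 = j by omega] at this
    obtain ⟨CN, hCN⟩ := hbound N (by omega)
    have hind : ∀ k : ℕ, f (N + k * n₀) z ≤ ((CN + (k : ℝ) * ((n₀ : ℝ) * b - δ) : ℝ) : EReal) := by
      intro k
      induction k with
      | zero => simpa using hCN z
      | succ k ih =>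
        have heq : N + (k + 1) * n₀ = n₀ + (N + k * n₀) := by ring
        have hstep := hsub n₀ (N + k * n₀) hn₀ (by omega) z
        rw [← heq] at hstep
        have hVmem : T^[N + k * n₀] z ∈ V := hNV _ (by omega)
        have hfV : f n₀ (T^[N + k * n₀] z) ≤ (((n₀ : ℝ) * b - δ : ℝ) : EReal) :=
          le_of_lt (hV _ hVmem)
        refine le_trans hstep (le_trans (add_le_add hfV ih) ?_)
        rw [← EReal.coe_add]
        apply EReal.coe_le_coe_iff.2
        push_cast
        ring_nf
        exact le_refl _
    obtain ⟨k, hk⟩ := exists_nat_gt ((CN - (N : ℝ) * b) / δ)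
    have hlb := hz (N + k * n₀) (by omega)
    have hcomb := le_trans hlb (hind k)
    rw [EReal.coe_le_coe_iff] at hcomb
    push_cast at hcomb
    have hNr : ((N : ℕ) : ℝ) = (N₀ : ℝ) + 1 := by rw [hNdef]; push_cast; ring
    have hNb : ((N : ℕ) : ℝ) * b = (N₀ : ℝ) * b + b := by rw [hNr]; ring
    have hexp : ((N₀ : ℝ) + 1 + (k : ℝ) * (n₀ : ℝ)) * b
        = (N₀ : ℝ) * b + b + (k : ℝ) * (n₀ : ℝ) * b := by ring
    have hexp2 : (k : ℝ) * ((n₀ : ℝ) * b - δ)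
        = (k : ℝ) * (n₀ : ℝ) * b - (k : ℝ) * δ := by ring
    rw [hNr, hexp, hexp2] at hcomb
    have h6 : (k : ℝ) * δ ≤ CN - (N : ℝ) * b := by linarith [hNb]
    have h7 : (k : ℝ) ≤ (CN - (N : ℝ) * b) / δ := by
      rw [le_div_iff₀ hδ]
      linarith
    linarith
  have hΩeq : Ω = K := le_antisymm hΩK (hKmin hΩA hΩK)
  refine ⟨z, ?_, hz⟩
  rw [← mem_omegaSet_iff]
  rw [hΩdef] at hΩeq
  rw [hΩeq]
  exact hzK


end Stmt19Aux

open Stmt19Aux in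

/-- Proposition A.7 and its corollary in the paper, generalising a lemma of
Y. Peres: there is a point — which may moreover be taken recurrent — all of whose subadditive
averages are at least `β̃[(f_n)] = lim_n sup_x (1/n) f_n(x)`.  (By Fekete's subadditivity
lemma this limit exists and equals the corresponding infimum over `n ≥ 1`, as recorded by the
first conjunct.) -/
theorem stmt19 {X : Type*} [MetricSpace X] [CompactSpace X] [Nonempty X]
    (T : X → X) (hT : Continuous T)
    (f : ℕ → X → EReal)
    (husc : ∀ n : ℕ, 1 ≤ n → UpperSemicontinuous (f n))
    (hntop : ∀ (n : ℕ) (y : X), 1 ≤ n → f n y ≠ ⊤)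
    (hsub : ∀ n m : ℕ, 1 ≤ n → 1 ≤ m → ∀ y : X, f (n + m) y ≤ f n (T^[m] y) + f m y) :
    Tendsto (fun n : ℕ => ⨆ x : X, cE n * f n x) atTop
      (𝓝 (⨅ n : ℕ+, ⨆ x : X, cE (n : ℕ) * f (n : ℕ) x)) ∧
    ∃ z : X, MapClusterPt z atTop (fun n : ℕ => T^[n + 1] z) ∧
      (⨅ n : ℕ+, ⨆ x : X, cE (n : ℕ) * f (n : ℕ) x)
        ≤ ⨅ m : ℕ+, cE (m : ℕ) * f (m : ℕ) z := by
  classical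
  have hmax' : ∀ n : ℕ, ∃ x : X, 1 ≤ n → ∀ y, f n y ≤ f n x := by
    intro n
    rcases Nat.eq_zero_or_pos n with h | h
    · exact ⟨Classical.arbitrary X, by omega⟩
    · obtain ⟨x, hx⟩ := usc_exists_max (husc n h)
      exact ⟨x, fun _ => hx⟩
  choose w hw using hmax'
  let t : ℕ → EReal := fun n => ⨆ x : X, cE n * f n x
  let β : EReal := ⨅ n : ℕ+, t (n : ℕ)
  have hcEpos : ∀ n : ℕ, 1 ≤ n → (0 : ℝ) < (n : ℝ)⁻¹ := fun n hn =>
    inv_pos.2 (by exact_mod_cast hn)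
  have hcEnonneg : ∀ n : ℕ, (0 : EReal) ≤ cE n := fun n =>
    EReal.coe_nonneg.2 (inv_nonneg.2 (by positivity))
  have ht_eq : ∀ n, 1 ≤ n → t n = cE n * f n (w n) := by
    intro n hn
    refine le_antisymm (iSup_le fun x => mul_le_mul_of_nonneg_left (hw n hn x) (hcEnonneg n)) ?_
    exact le_iSup (fun x : X => cE n * f n x) (w n)
  have hS_ne_top : ∀ n, 1 ≤ n → f n (w n) ≠ ⊤ := fun n hn => hntop n (w n) hn
  have hS_subadd : ∀ n m, 1 ≤ n → 1 ≤ m →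
      f (n + m) (w (n + m)) ≤ f n (w n) + f m (w m) := by
    intro n m hn hm
    refine le_trans (hsub n m hn hm (w (n + m))) (add_le_add (hw n hn _) (hw m hm _))
  -- ### Part 1 : convergence
  have hpart1 : Tendsto t atTop (𝓝 β) := by
    refine tendsto_of_le_liminf_of_limsup_le ?_ ?_ (by isBoundedDefault) (by isBoundedDefault)
    · refine le_liminf_of_le (by isBoundedDefault) ?_
      filter_upwards [eventually_ge_atTop 1] with n hn
      exact iInf_le (fun m : ℕ+ => t (m : ℕ)) ⟨n, hn⟩
    · refine le_iInf fun N => ?_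
      have hN1 : 1 ≤ (N : ℕ) := N.property
      by_cases hbot : ∃ r : ℕ, 1 ≤ r ∧ f r (w r) = ⊥
      · obtain ⟨r, hr1, hrbot⟩ := hbot
        have hev : ∀ᶠ n in atTop, t n = ⊥ := by
          filter_upwards [eventually_ge_atTop (r + 1)] with n hn
          have hboteq : ∀ x, f n x = ⊥ := by
            intro x
            have h1 : f n x ≤ f r (T^[n - r] x) + f (n - r) x := by
              have := hsub r (n - r) hr1 (by omega) x
              rwa [show r + (n - r) = n by omega] at this
            have h2 : f r (T^[n - r] x) ≤ (⊥ : EReal) := hrbot ▸ hw r hr1 _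
            have h3 : f n x ≤ ⊥ + f (n - r) x :=
              le_trans h1 (add_le_add h2 le_rfl)
            rw [EReal.bot_add] at h3
            exact le_bot_iff.1 h3
          have hmul : ∀ x : X, cE n * f n x = ⊥ := fun x => by
            rw [hboteq x]; exact EReal.coe_mul_bot_of_pos (hcEpos n (by omega))
          show (⨆ x : X, cE n * f n x) = ⊥
          simp only [hmul, iSup_const]
        have hlimsup : limsup t atTop ≤ (⊥ : EReal) :=
          limsup_le_of_le (by isBoundedDefault) (hev.mono fun n h => h.le)
        exact le_trans hlimsup bot_le
      · push_neg at hbot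
        set N' : ℕ := (N : ℕ) with hN'def
        set s : ℕ → ℝ := fun n => (f n (w n)).toReal with hsdef
        have hcoe : ∀ n, 1 ≤ n → ((s n : ℝ) : EReal) = f n (w n) := fun n hn =>
          EReal.coe_toReal (hS_ne_top n hn) (hbot n hn)
        have chain : ∀ k r : ℕ, 1 ≤ r →
            f (k * N' + r) (w (k * N' + r)) ≤ (((k : ℝ) * s N' + s r : ℝ) : EReal) := by
          intro k
          induction k with
          | zero =>
            intro r hr
            rw [show 0 * N' + r = r by ring]
            rw [show ((0 : ℕ) : ℝ) * s N' + s r = s r by push_cast; ring]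
            exact (hcoe r hr).ge
          | succ k ih =>
            intro r hr
            have heq : (k + 1) * N' + r = N' + (k * N' + r) := by ring
            rw [heq]
            refine le_trans (hS_subadd N' (k * N' + r) hN1 (le_trans hr (Nat.le_add_left r _))) ?_
            rw [← hcoe N' hN1]
            refine le_trans (add_le_add le_rfl (ih r hr)) ?_
            rw [← EReal.coe_add]
            apply EReal.coe_le_coe_iff.2
            push_cast
            ring_nf
            exact le_refl _
        have hNe : (Finset.Icc 1 N').Nonempty := ⟨1, by simp [hN1]⟩
        set C : ℝ := (Finset.Icc 1 N').sup' hNe (fun r => |s r|) with hCdef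
        set D : ℝ := |s N'| + C with hDdef
        have key : ∀ n : ℕ, N' + 1 ≤ n → t n ≤ ((s N' / N' + D / n : ℝ) : EReal) := by
          intro n hn
          have hN'pos : 0 < N' := hN1
          set k : ℕ := (n - 1) / N' with hkdef
          set r : ℕ := (n - 1) % N' + 1 with hrdef
          have hr1 : 1 ≤ r := Nat.succ_le_succ (Nat.zero_le _)
          have hrN : r ≤ N' := Nat.succ_le_of_lt (Nat.mod_lt _ hN'pos)
          have hn1 : 1 ≤ n := by omega
          have hnk : n = k * N' + r := by
            have h := Nat.div_add_mod (n - 1) N'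
            calc n = (n - 1) + 1 := by omega
            _ = (N' * ((n - 1) / N') + (n - 1) % N') + 1 := by rw [h]
            _ = k * N' + r := by rw [hkdef, hrdef]; ring
          have h2 : f n (w n) ≤ (((k : ℝ) * s N' + s r : ℝ) : EReal) := by
            rw [hnk]; exact chain k r hr1
          have h3 : t n ≤ cE n * (((k : ℝ) * s N' + s r : ℝ) : EReal) := by
            rw [ht_eq n (by omega)]
            exact mul_le_mul_of_nonneg_left h2 (hcEnonneg n)
          refine le_trans h3 ?_
          show ((((n : ℝ)⁻¹ : ℝ)) : EReal) * _ ≤ _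
          rw [← EReal.coe_mul]
          apply EReal.coe_le_coe_iff.2
          -- real analysis
          have hnpos : (0 : ℝ) < n := by
            have : 0 < n := by omega
            exact_mod_cast this
          have hkub : (k : ℝ) * N' ≤ (n : ℝ) - 1 := by
            have h4 : k * N' + 1 ≤ n :=
              le_trans (Nat.add_le_add_left hr1 (k * N')) (le_of_eq hnk.symm)
            have h5 := (Nat.cast_le (α := ℝ)).2 h4
            push_cast at h5
            linarith
          have hklb : (n : ℝ) ≤ (k : ℝ) * N' + N' := by
            have h4 : n ≤ k * N' + N' :=
              le_trans (le_of_eq hnk) (Nat.add_le_add_left hrN (k * N'))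
            have h5 := (Nat.cast_le (α := ℝ)).2 h4
            push_cast at h5
            linarith
          have hsr : s r ≤ C := by
            refine le_trans (le_abs_self _) ?_
            exact Finset.le_sup' (f := fun r => |s r|) (Finset.mem_Icc.2 ⟨hr1, hrN⟩)
          have hN'posR : (0 : ℝ) < N' := by exact_mod_cast hN'pos
          have hnum : (k : ℝ) * s N' + s r ≤ (n : ℝ) * (s N' / N') + D := by
            rcases le_or_gt 0 (s N') with hpos | hneg
            · have hkn : (k : ℝ) ≤ (n : ℝ) / N' := by
                rw [le_div_iff₀ hN'posR]
                linarith
              have := mul_le_mul_of_nonneg_right hkn hpos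
              have habs : (0 : ℝ) ≤ |s N'| := abs_nonneg _
              have hdiv : (n : ℝ) / N' * s N' = (n : ℝ) * (s N' / N') := by ring
              rw [hDdef]
              nlinarith
            · have hkn : (n : ℝ) / N' - 1 ≤ (k : ℝ) := by
                rw [sub_le_iff_le_add, div_le_iff₀ hN'posR]
                linarith
              have := mul_le_mul_of_nonpos_right hkn (le_of_lt hneg)
              have habs : |s N'| = -(s N') := abs_of_neg hneg
              have hdiv : ((n : ℝ) / N' - 1) * s N' = (n : ℝ) * (s N' / N') - s N' := by ring
              rw [hDdef, habs]
              nlinarith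
          have hfinal : (n : ℝ)⁻¹ * ((k : ℝ) * s N' + s r) ≤ s N' / N' + D / n := by
            have h5 := mul_le_mul_of_nonneg_left hnum (le_of_lt (inv_pos.2 hnpos))
            refine le_trans h5 ?_
            rw [mul_add]
            have h6 : (n : ℝ)⁻¹ * ((n : ℝ) * (s N' / N')) = s N' / N' := by
              field_simp
            rw [h6]
            apply add_le_add le_rfl
            rw [inv_mul_eq_div]
          exact hfinal
        have hv : Tendsto (fun n : ℕ => ((s N' / N' + D / n : ℝ) : EReal)) atTop
            (𝓝 ((s N' / N' : ℝ) : EReal)) := by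
          have h0 : Tendsto (fun n : ℕ => s N' / N' + D / n) atTop (𝓝 (s N' / N' + 0)) :=
            tendsto_const_nhds.add (tendsto_const_div_atTop_nhds_zero_nat D)
          rw [add_zero] at h0
          exact (continuous_coe_real_ereal.tendsto _).comp h0
        have hls : limsup t atTop ≤ ((s N' / N' : ℝ) : EReal) := by
          have h7 : t ≤ᶠ[atTop] fun n : ℕ => ((s N' / N' + D / n : ℝ) : EReal) := by
            filter_upwards [eventually_ge_atTop (N' + 1)] with n hn
            exact key n hn
          refine le_trans (limsup_le_limsup h7 (by isBoundedDefault) (by isBoundedDefault)) ?_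
          rw [hv.limsup_eq]
        have htN : t (N : ℕ) = ((s N' / N' : ℝ) : EReal) := by
          rw [show ((N : ℕ) : ℕ) = N' from rfl, ht_eq N' hN1, ← hcoe N' hN1]
          show (((N' : ℝ)⁻¹ : ℝ) : EReal) * _ = _
          rw [← EReal.coe_mul]
          congr 1
          rw [inv_mul_eq_div]
        rw [htN]
        exact hls
  -- ### Part 2 : recurrent point
  have hβ_ne_top : β ≠ ⊤ := by
    have h1 : β ≤ t 1 := iInf_le (fun m : ℕ+ => t (m : ℕ)) 1
    have h2 : t 1 = f 1 (w 1) := by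
      rw [ht_eq 1 le_rfl]
      have hc1 : cE 1 = 1 := by
        show ((((1 : ℕ) : ℝ)⁻¹ : ℝ) : EReal) = 1
        norm_num
      rw [hc1, one_mul]
    intro hc
    rw [hc, top_le_iff, h2] at h1
    exact hS_ne_top 1 le_rfl h1
  have hpart2 : ∃ z : X, MapClusterPt z atTop (fun n : ℕ => T^[n + 1] z) ∧
      β ≤ ⨅ m : ℕ+, cE (m : ℕ) * f (m : ℕ) z := by
    by_cases hβbot : β = ⊥
    · obtain ⟨z, hz, -⟩ := main_machine (f := fun _ _ => (0 : EReal)) hT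
        (fun n _ => upperSemicontinuous_const)
        (fun n m _ _ y => by simp)
        (fun r _ => ⟨0, fun x => by simp⟩)
        (b := 0)
        (fun n _ => ⟨Classical.arbitrary X, by simp⟩)
      exact ⟨z, hz, hβbot ▸ bot_le⟩
    · set bR : ℝ := β.toReal with hbRdef
      have hβeq : β = (bR : EReal) := (EReal.coe_toReal hβ_ne_top hβbot).symm
      have hβ_le : ∀ n : ℕ, 1 ≤ n → (((n : ℝ) * bR : ℝ) : EReal) ≤ f n (w n) := by
        intro n hn
        have h1 : β ≤ t n := iInf_le (fun m : ℕ+ => t (m : ℕ)) ⟨n, hn⟩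
        rw [ht_eq n hn] at h1
        have hnne : ((n : ℝ) : EReal) ≥ 0 := EReal.coe_nonneg.2 (by positivity)
        have h2 : ((n : ℝ) : EReal) * β ≤ ((n : ℝ) : EReal) * (cE n * f n (w n)) :=
          mul_le_mul_of_nonneg_left h1 hnne
        rw [← mul_assoc] at h2
        have h3 : ((n : ℝ) : EReal) * cE n = 1 := by
          show ((n : ℝ) : EReal) * (((n : ℝ)⁻¹ : ℝ) : EReal) = 1
          rw [← EReal.coe_mul, mul_inv_cancel₀ (by positivity : ((n : ℝ)) ≠ 0)]
          rfl
        rw [h3, one_mul, hβeq, ← EReal.coe_mul] at h2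
        exact h2
      have hbound' : ∀ r, 1 ≤ r → ∃ C : ℝ, ∀ x, f r x ≤ (C : EReal) := by
        intro r hr
        by_cases hrb : f r (w r) = ⊥
        · exact ⟨0, fun x => le_trans (hw r hr x) (by rw [hrb]; exact bot_le)⟩
        · refine ⟨(f r (w r)).toReal, fun x => ?_⟩
          rw [EReal.coe_toReal (hS_ne_top r hr) hrb]
          exact hw r hr x
      obtain ⟨z, hz, hlow⟩ := main_machine hT husc hsub hbound'
        (fun n hn => ⟨w n, hβ_le n hn⟩)
      refine ⟨z, hz, le_iInf fun m => ?_⟩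
      have hm1 : 1 ≤ (m : ℕ) := m.property
      have h1 := hlow (m : ℕ) hm1
      have h2 : cE (m : ℕ) * ((((m : ℕ) : ℝ) * bR : ℝ) : EReal) ≤ cE (m : ℕ) * f (m : ℕ) z :=
        mul_le_mul_of_nonneg_left h1 (hcEnonneg (m : ℕ))
      have h3 : cE (m : ℕ) * ((((m : ℕ) : ℝ) * bR : ℝ) : EReal) = (bR : EReal) := by
        show ((((m : ℕ) : ℝ)⁻¹ : ℝ) : EReal) * _ = _
        rw [← EReal.coe_mul]
        congr 1
        rw [inv_mul_cancel_left₀ (by positivity : (((m : ℕ) : ℝ)) ≠ 0)]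
      rw [h3] at h2
      rw [hβeq]
      exact h2
  exact ⟨hpart1, hpart2⟩


end
end
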